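/- arXiv:1006.4785 — 4 statements merged into one kernel-verified Lean document; each statement's English description precedes it below -/
import Mathlib

section
/- Let $X=\mathbb{C}^n$ and let $\{I_j\}_{j=1}^\ell$ be subsets of $\{1,\dots,n\}$ satisfying the nesting-or-disjoint conditions (1.2), with $\hat I_j = I_j\setminus\bigcup_{I_k\subsetneq I_j}I_k$. Define, for an open set $U$ of product type, proper open convex cones $G_j\subset\mathbb{C}^{\hat I_j}$, and $\epsilon>0$: $V_j=\{z\in U: z_{\hat I_j}\in G_j,\ |z_{\hat I_\beta}|<\epsilon|z_{\hat I_j}| \text{ for } \beta \text{ with } I_\beta\subsetneq I_j\}$ and $S=V_1\cap\cdots\cap V_\ell$. Then $\overline{S}=\overline{V_1}\cap\cdots\cap\overline{V_\ell}$, where $\overline{V_j}=\{z\in\overline U: z_{\hat I_j}\in\overline{G_j},\ |z_{\hat I_\beta}|\le\epsilon|z_{\hat I_j}|\text{ for }I_\beta\subsetneq I_j\}$. -/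
noncomputable def en {n : ℕ} (A : Finset (Fin n)) (z : Fin n → ℂ) : ℝ :=
  Real.sqrt (∑ i ∈ A, ‖z i‖ ^ 2)

noncomputable def toE {n : ℕ} (A : Finset (Fin n)) (z : Fin n → ℂ) : EuclideanSpace ℂ A :=
  WithLp.toLp 2 (fun i => z i)

lemma en_eq {n : ℕ} (A : Finset (Fin n)) (z : Fin n → ℂ) : en A z = ‖toE A z‖ := by
  rw [EuclideanSpace.norm_eq, en]
  congr 1
  rw [← Finset.sum_coe_sort A (fun i => ‖z i‖ ^ 2)]
  rfl

lemma toE_add {n : ℕ} (A : Finset (Fin n)) (u v : Fin n → ℂ) :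
    toE A (u + v) = toE A u + toE A v := rfl

lemma toE_smul {n : ℕ} (A : Finset (Fin n)) (c : ℝ) (z : Fin n → ℂ) :
    toE A (c • z) = c • toE A z := rfl

lemma en_nonneg {n : ℕ} (A : Finset (Fin n)) (z : Fin n → ℂ) : 0 ≤ en A z :=
  Real.sqrt_nonneg _

lemma en_add_le {n : ℕ} (A : Finset (Fin n)) (u v : Fin n → ℂ) :
    en A (u + v) ≤ en A u + en A v := by
  rw [en_eq, en_eq, en_eq, toE_add]; exact norm_add_le _ _

lemma en_smul {n : ℕ} (A : Finset (Fin n)) (c : ℝ) (hc : 0 ≤ c) (z : Fin n → ℂ) :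
    en A (c • z) = c * en A z := by
  rw [en_eq, en_eq, toE_smul, norm_smul, Real.norm_eq_abs, abs_of_nonneg hc]

lemma en_congr {n : ℕ} (A : Finset (Fin n)) {u v : Fin n → ℂ}
    (h : ∀ i ∈ A, u i = v i) : en A u = en A v := by
  unfold en; congr 1; exact Finset.sum_congr rfl fun i hi => by rw [h i hi]

lemma en_neg {n : ℕ} (A : Finset (Fin n)) (z : Fin n → ℂ) : en A (-z) = en A z := by
  unfold en; congr 1; exact Finset.sum_congr rfl fun i hi => by simp

lemma en_sub_le {n : ℕ} (A : Finset (Fin n)) (u v : Fin n → ℂ) :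
    en A u - en A v ≤ en A (u + v) := by
  have := en_add_le A (u + v) (-v)
  rw [en_neg] at this
  simpa using this

lemma en_continuous {n : ℕ} (A : Finset (Fin n)) : Continuous (en A) := by
  unfold en
  exact Real.continuous_sqrt.comp (continuous_finset_sum _ fun i _ =>
    ((continuous_norm.comp (continuous_apply i)).pow 2))

lemma en_eq_zero_iff {n : ℕ} (A : Finset (Fin n)) (z : Fin n → ℂ) :
    en A z = 0 ↔ ∀ i ∈ A, z i = 0 := by
  unfold en
  rw [Real.sqrt_eq_zero (by positivity)]
  rw [Finset.sum_eq_zero_iff_of_nonneg (fun i _ => by positivity)]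
  constructor
  · intro h i hi
    have := h i hi
    simpa using this
  · intro h i hi; simp [h i hi]

lemma en_coord_le {n : ℕ} (A : Finset (Fin n)) (z : Fin n → ℂ) {i : Fin n} (hi : i ∈ A) :
    ‖z i‖ ≤ en A z := by
  unfold en
  rw [show ‖z i‖ = Real.sqrt (‖z i‖ ^ 2) by
    rw [Real.sqrt_sq (norm_nonneg _)]]
  exact Real.sqrt_le_sqrt (Finset.single_le_sum (f := fun j => ‖z j‖ ^ 2) (fun j _ => by positivity) hi)


section helpers
variable {n : ℕ} {G : Set (Fin n → ℂ)}

lemma closure_smul_mem (hGcone : ∀ z ∈ G, ∀ c : ℝ, 0 < c → c • z ∈ G)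
    {z : Fin n → ℂ} (hz : z ∈ closure G) {c : ℝ} (hc : 0 < c) : c • z ∈ closure G := by
  have h1 : c • z ∈ (c • ·) '' closure G := ⟨z, hz, rfl⟩
  have h2 : (c • ·) '' closure G ⊆ closure ((c • ·) '' G) :=
    image_closure_subset_closure_image (continuous_const_smul c)
  have h3 : (c • ·) '' G ⊆ G := by
    rintro _ ⟨x, hx, rfl⟩; exact hGcone x hx c hc
  exact closure_mono h3 (h2 h1)

lemma closure_dep (A : Finset (Fin n))
    (hdep : ∀ z w : Fin n → ℂ, (∀ i ∈ A, z i = w i) → (z ∈ G ↔ w ∈ G))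
    {z w : Fin n → ℂ} (hz : z ∈ closure G) (h : ∀ i ∈ A, z i = w i) : w ∈ closure G := by
  set d := w - z with hd
  have hf : Continuous (· + d) := continuous_add_right d
  have h1 : z + d ∈ (· + d) '' closure G := ⟨z, hz, rfl⟩
  have h2 : (· + d) '' closure G ⊆ closure ((· + d) '' G) :=
    image_closure_subset_closure_image hf
  have h3 : (· + d) '' G ⊆ G := by
    rintro _ ⟨x, hx, rfl⟩
    exact (hdep x (x + d) (fun i hi => by
      simp [hd, show w i = z i from (h i hi).symm])).mp hx
  have : z + d ∈ closure G := closure_mono h3 (h2 h1)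
  simpa [hd] using this

lemma cone_add_mem (hGopen : IsOpen G) (hGconv : Convex ℝ G)
    (hGcone : ∀ z ∈ G, ∀ c : ℝ, 0 < c → c • z ∈ G)
    {u v : Fin n → ℂ} (hu : u ∈ closure G) (hv : v ∈ G) : u + v ∈ G := by
  have hmem : (1/2 : ℝ) • v + (1/2 : ℝ) • u ∈ interior G :=
    hGconv.combo_interior_closure_mem_interior (by rwa [hGopen.interior_eq]) hu
      (by norm_num) (by norm_num) (by norm_num)
  rw [hGopen.interior_eq] at hmem
  have := hGcone _ hmem 2 (by norm_num)
  have heq : (2:ℝ) • ((1/2 : ℝ) • v + (1/2 : ℝ) • u) = u + v := by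
    rw [smul_add, smul_smul, smul_smul]; norm_num; abel
  rwa [heq] at this

end helpers

/-- restriction of z to coordinates in A -/
noncomputable def restr {n : ℕ} (A : Finset (Fin n)) (z : Fin n → ℂ) : Fin n → ℂ :=
  fun i => if i ∈ A then z i else 0

lemma restr_agree {n : ℕ} (A : Finset (Fin n)) (z : Fin n → ℂ) :
    ∀ i ∈ A, z i = restr A z i := fun i hi => by simp [restr, hi]

lemma coneconst {n : ℕ} (A : Finset (Fin n)) (K : Set (Fin n → ℂ))
    (hKc : IsClosed K)
    (hscale : ∀ z ∈ K, ∀ c : ℝ, 0 < c → c • z ∈ K)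
    (hdep : ∀ z w : Fin n → ℂ, (∀ i ∈ A, z i = w i) → (z ∈ K ↔ w ∈ K))
    (hproper : ∀ z ∈ K, -z ∈ K → ∀ i ∈ A, z i = 0) :
    ∃ δ : ℝ, 0 < δ ∧ δ ≤ 1 ∧ ∀ u ∈ K, ∀ v ∈ K,
      δ * (en A u + en A v) ≤ en A (u + v) := by
  classical
  set T : Set ((Fin n → ℂ) × (Fin n → ℂ)) :=
    {p | p.1 ∈ K ∧ p.2 ∈ K ∧ (∀ i, i ∉ A → p.1 i = 0) ∧ (∀ i, i ∉ A → p.2 i = 0) ∧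
      en A p.1 + en A p.2 = 1} with hT
  have hTclosed : IsClosed T := by
    have c1 : IsClosed {p : (Fin n → ℂ) × (Fin n → ℂ) | p.1 ∈ K} := hKc.preimage continuous_fst
    have c2 : IsClosed {p : (Fin n → ℂ) × (Fin n → ℂ) | p.2 ∈ K} := hKc.preimage continuous_snd
    have c3 : IsClosed {p : (Fin n → ℂ) × (Fin n → ℂ) | ∀ i, i ∉ A → p.1 i = 0} := by
      have h : {p : (Fin n → ℂ) × (Fin n → ℂ) | ∀ i, i ∉ A → p.1 i = 0} =
          ⋂ i ∈ {i : Fin n | i ∉ A}, {p : (Fin n → ℂ) × (Fin n → ℂ) | p.1 i = 0} := by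
        ext p; simp
      rw [h]
      exact isClosed_biInter fun i _ =>
        isClosed_eq ((continuous_apply i).comp continuous_fst) continuous_const
    have c4 : IsClosed {p : (Fin n → ℂ) × (Fin n → ℂ) | ∀ i, i ∉ A → p.2 i = 0} := by
      have h : {p : (Fin n → ℂ) × (Fin n → ℂ) | ∀ i, i ∉ A → p.2 i = 0} =
          ⋂ i ∈ {i : Fin n | i ∉ A}, {p : (Fin n → ℂ) × (Fin n → ℂ) | p.2 i = 0} := by
        ext p; simp
      rw [h]
      exact isClosed_biInter fun i _ =>
        isClosed_eq ((continuous_apply i).comp continuous_snd) continuous_const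
    have c5 : IsClosed {p : (Fin n → ℂ) × (Fin n → ℂ) | en A p.1 + en A p.2 = 1} :=
      isClosed_eq (((en_continuous A).comp continuous_fst).add
        ((en_continuous A).comp continuous_snd)) continuous_const
    exact c1.inter (c2.inter (c3.inter (c4.inter c5)))
  have coordbd : ∀ q : Fin n → ℂ, q ∈ K → (∀ i, i ∉ A → q i = 0) → ∀ c : ℝ, en A q ≤ c → ‖q‖ ≤ c := by
    intro q _ hsupp c hc
    refine (pi_norm_le_iff_of_nonneg ((en_nonneg A q).trans hc)).mpr fun i => ?_
    by_cases hi : i ∈ A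
    · calc ‖q i‖ = ‖q i‖ := rfl
        _ ≤ en A q := en_coord_le A q hi
        _ ≤ c := hc
    · rw [hsupp i hi]; simpa using (en_nonneg A q).trans hc
  have hTbdd : Bornology.IsBounded T := by
    refine (Metric.isBounded_closedBall (x := (0 : (Fin n → ℂ) × (Fin n → ℂ))) (r := 1)).subset ?_
    rintro ⟨p1, p2⟩ ⟨hp1, hp2, hs1, hs2, hsum⟩
    rw [Metric.mem_closedBall, dist_zero_right, Prod.norm_def]
    have e1 : en A p1 ≤ 1 := by nlinarith [en_nonneg A p2]
    have e2 : en A p2 ≤ 1 := by nlinarith [en_nonneg A p1]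
    exact max_le (coordbd p1 hp1 hs1 1 e1) (coordbd p2 hp2 hs2 1 e2)
  have hTcpt : IsCompact T := Metric.isCompact_of_isClosed_isBounded hTclosed hTbdd
  have hfc : ContinuousOn (fun p : (Fin n → ℂ) × (Fin n → ℂ) => en A (p.1 + p.2)) T :=
    ((en_continuous A).comp (continuous_fst.add continuous_snd)).continuousOn
  -- the general statement reduces to T
  have main : ∀ δ : ℝ, 0 < δ → δ ≤ 1 →
      (∀ p ∈ T, δ ≤ en A (p.1 + p.2)) →
      ∀ u ∈ K, ∀ v ∈ K, δ * (en A u + en A v) ≤ en A (u + v) := by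
    intro δ hδ0 hδ1 hδT u hu v hv
    set c := en A u + en A v with hc
    rcases eq_or_lt_of_le (add_nonneg (en_nonneg A u) (en_nonneg A v)) with hc0 | hc0
    · rw [hc, ← hc0, mul_zero]; exact en_nonneg _ _
    · -- normalize
      have hcpos : 0 < c := hc0
      have hru : restr A u ∈ K := (hdep u (restr A u) (restr_agree A u)).mp hu
      have hrv : restr A v ∈ K := (hdep v (restr A v) (restr_agree A v)).mp hv
      have henu : en A (restr A u) = en A u := (en_congr A (restr_agree A u)).symm
      have henv : en A (restr A v) = en A v := (en_congr A (restr_agree A v)).symm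
      have hmem : (c⁻¹ • restr A u, c⁻¹ • restr A v) ∈ T := by
        refine ⟨hscale _ hru _ (inv_pos.mpr hcpos), hscale _ hrv _ (inv_pos.mpr hcpos),
          fun i hi => ?_, fun i hi => ?_, ?_⟩
        · simp [restr, hi]
        · simp [restr, hi]
        · rw [en_smul A _ (inv_nonneg.mpr hcpos.le), en_smul A _ (inv_nonneg.mpr hcpos.le),
            henu, henv, ← mul_add, inv_mul_cancel₀ hcpos.ne']
      have := hδT _ hmem
      have heq : en A (c⁻¹ • restr A u + c⁻¹ • restr A v) = c⁻¹ * en A (u + v) := by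
        rw [← smul_add, en_smul A _ (inv_nonneg.mpr hcpos.le)]
        congr 1
        refine en_congr A fun i hi => ?_
        simp [restr, hi]
      rw [heq] at this
      calc δ * c ≤ (c⁻¹ * en A (u+v)) * c := by
            exact mul_le_mul_of_nonneg_right this hcpos.le
        _ = en A (u + v) := by field_simp
  by_cases hTne : T.Nonempty
  · obtain ⟨p₀, hp₀, hmin'⟩ := hTcpt.exists_isMinOn hTne hfc
    have hmin : ∀ p ∈ T, en A (p₀.1 + p₀.2) ≤ en A (p.1 + p.2) := fun p hp => hmin' hp
    have hpos : 0 < en A (p₀.1 + p₀.2) := by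
      rcases (en_nonneg A (p₀.1 + p₀.2)).lt_or_eq with h | h
      · exact h
      · exfalso
        obtain ⟨hp1, hp2, hs1, hs2, hsum⟩ := hp₀
        have hzero : ∀ i ∈ A, p₀.1 i + p₀.2 i = 0 := by
          intro i hi
          have := (en_eq_zero_iff A (p₀.1 + p₀.2)).mp h.symm i hi
          simpa using this
        have hneg : -p₀.1 ∈ K := by
          refine (hdep p₀.2 (-p₀.1) fun i hi => ?_).mp hp2
          have := hzero i hi; rw [Pi.neg_apply]; linear_combination this
        have hz1 : ∀ i ∈ A, p₀.1 i = 0 := hproper _ hp1 hneg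
        have hz2 : ∀ i ∈ A, p₀.2 i = 0 := by
          intro i hi
          have := hzero i hi
          rw [hz1 i hi] at this; simpa using this
        rw [(en_eq_zero_iff A p₀.1).mpr hz1, (en_eq_zero_iff A p₀.2).mpr hz2] at hsum
        norm_num at hsum
    refine ⟨min (en A (p₀.1 + p₀.2)) 1, lt_min hpos one_pos, min_le_right _ _, ?_⟩
    refine main _ (lt_min hpos one_pos) (min_le_right _ _) (fun p hp => ?_)
    exact le_trans (min_le_left _ _) (hmin p hp)
  · refine ⟨1, one_pos, le_refl _, main 1 one_pos (le_refl _) (fun p hp => absurd ⟨p, hp⟩ hTne)⟩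

set_option maxHeartbeats 2000000 in
lemma key {n ℓ : ℕ} (I : Fin ℓ → Finset (Fin n))
    (h1 : ∀ j k, j ≠ k → I j ⊂ I k ∨ I k ⊂ I j ∨ Disjoint (I j) (I k))
    (Ihat : Fin ℓ → Finset (Fin n))
    (hIhat : ∀ j, Ihat j = I j \ (Finset.univ.filter (fun k => I k ⊂ I j)).biUnion I)
    (G : Fin ℓ → Set (Fin n → ℂ))
    (hGopen : ∀ j, IsOpen (G j))
    (hGconv : ∀ j, Convex ℝ (G j))
    (hGcone : ∀ j, ∀ z ∈ G j, ∀ c : ℝ, 0 < c → c • z ∈ G j)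
    (hGne : ∀ j, (G j).Nonempty)
    (hG0 : ∀ j, (0 : Fin n → ℂ) ∉ G j)
    (hGdep : ∀ j, ∀ z w : Fin n → ℂ, (∀ i ∈ Ihat j, z i = w i) → (z ∈ G j ↔ w ∈ G j))
    (hGproper : ∀ j, ∀ z, z ∈ closure (G j) → -z ∈ closure (G j) → ∀ i ∈ Ihat j, z i = 0)
    (R : Fin ℓ → ℝ) (hR : ∀ j, 0 < R j)
    (W : Set (Fin n → ℂ)) (hWconv : Convex ℝ W) (hWopen : IsOpen W) (hWne : W.Nonempty)
    (hWdep : ∀ z w : Fin n → ℂ, (∀ i, (∀ j, i ∉ I j) → z i = w i) → (z ∈ W ↔ w ∈ W))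
    (U : Set (Fin n → ℂ))
    (hU : U = {z | (∀ j, en (Ihat j) z < R j) ∧ z ∈ W})
    (ε : ℝ) (hε : 0 < ε)
    (V : Fin ℓ → Set (Fin n → ℂ))
    (hV : ∀ j, V j = {z ∈ U | z ∈ G j ∧ ∀ β, I β ⊂ I j → en (Ihat β) z < ε * en (Ihat j) z})
    (P : Set (Fin ℓ)) (z : Fin n → ℂ)
    (hzU : z ∈ closure U)
    (hzG : ∀ j ∈ P, z ∈ closure (G j))
    (hzn : ∀ j ∈ P, ∀ β, I β ⊂ I j → en (Ihat β) z ≤ ε * en (Ihat j) z) :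
    ∀ r : ℝ, 0 < r → ∃ y, (∀ j ∈ P, y ∈ V j) ∧ dist z y < r := by
  classical
  -- disjointness of the Ihat
  have hsub : ∀ k, Ihat k ⊆ I k := fun k => by rw [hIhat k]; exact Finset.sdiff_subset
  have hdisj : ∀ k k' : Fin ℓ, k ≠ k' → ∀ i, i ∈ Ihat k → i ∉ Ihat k' := by
    intro k k' hkk i hik hik'
    rcases h1 k k' hkk with h | h | h
    · have hmem : i ∈ (Finset.univ.filter (fun m => I m ⊂ I k')).biUnion I :=
        Finset.mem_biUnion.mpr ⟨k, by simp [h], hsub k hik⟩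
      rw [hIhat k'] at hik'
      exact (Finset.mem_sdiff.mp hik').2 hmem
    · have hmem : i ∈ (Finset.univ.filter (fun m => I m ⊂ I k)).biUnion I :=
        Finset.mem_biUnion.mpr ⟨k', by simp [h], hsub k' hik'⟩
      rw [hIhat k] at hik
      exact (Finset.mem_sdiff.mp hik).2 hmem
    · exact (Finset.disjoint_left.mp h) (hsub k hik) (hsub k' hik')
  -- depth function
  obtain ⟨d, hdmono⟩ : ∃ d : Fin ℓ → ℕ, ∀ β j, I β ⊂ I j → d j + 1 ≤ d β := by
    refine ⟨fun k => (Finset.univ.filter (fun j => I k ⊂ I j)).card, ?_⟩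
    intro β j h
    have hsub2 : insert j (Finset.univ.filter fun m => I j ⊂ I m) ⊆
        Finset.univ.filter fun m => I β ⊂ I m := by
      intro x hx
      rcases Finset.mem_insert.mp hx with rfl | hx
      · simp [h]
      · simp only [Finset.mem_filter, Finset.mem_univ, true_and] at hx ⊢
        exact h.trans hx
    have hjn : j ∉ Finset.univ.filter fun m => I j ⊂ I m := by
      simp only [Finset.mem_filter, Finset.mem_univ, true_and]
      exact fun h' => ssubset_irrefl _ h'
    calc (Finset.univ.filter fun m => I j ⊂ I m).card + 1
        = (insert j (Finset.univ.filter fun m => I j ⊂ I m)).card := by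
          rw [Finset.card_insert_of_notMem hjn]
      _ ≤ _ := Finset.card_le_card hsub2
  -- normalized generators
  have hgex : ∀ j : Fin ℓ, ∃ g, g ∈ G j ∧ en (Ihat j) g = 1 := by
    intro j
    obtain ⟨g', hg'⟩ := hGne j
    have hN : 0 < en (Ihat j) g' := by
      rcases (en_nonneg (Ihat j) g').lt_or_eq with h | h
      · exact h
      · exact absurd ((hGdep j g' 0 (fun i hi => by
          simpa using (en_eq_zero_iff _ g').mp h.symm i hi)).mp hg') (hG0 j)
    refine ⟨(en (Ihat j) g')⁻¹ • g', hGcone j g' hg' _ (inv_pos.mpr hN), ?_⟩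
    rw [en_smul _ _ (inv_nonneg.mpr hN.le), inv_mul_cancel₀ hN.ne']
  choose g hgG hg1 using hgex
  -- cone constants
  have hDex : ∀ j : Fin ℓ, ∃ δ : ℝ, 0 < δ ∧ δ ≤ 1 ∧ ∀ u ∈ closure (G j), ∀ v ∈ closure (G j),
      δ * (en (Ihat j) u + en (Ihat j) v) ≤ en (Ihat j) (u + v) := by
    intro j
    refine coneconst (Ihat j) (closure (G j)) isClosed_closure
      (fun x hx c hc => closure_smul_mem (hGcone j) hx hc)
      (fun x w h => ⟨fun hx => closure_dep (Ihat j) (hGdep j) hx h,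
        fun hw => closure_dep (Ihat j) (hGdep j) hw (fun i hi => (h i hi).symm)⟩)
      (hGproper j)
  choose D hD0 hD1 hDin using hDex
  -- global minima
  obtain ⟨δm, hδm0, hδm1, hδmD⟩ : ∃ δm : ℝ, 0 < δm ∧ δm ≤ 1 ∧ ∀ j, δm ≤ D j := by
    refine ⟨(insert 1 (Finset.univ.image D)).min' (Finset.insert_nonempty _ _), ?_, ?_, ?_⟩
    · have hmem := (insert 1 (Finset.univ.image D)).min'_mem (Finset.insert_nonempty _ _)
      rcases Finset.mem_insert.mp hmem with h | h
      · rw [h]; norm_num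
      · obtain ⟨j, -, hj⟩ := Finset.mem_image.mp h
        rw [← hj]; exact hD0 j
    · exact Finset.min'_le _ _ (Finset.mem_insert_self _ _)
    · exact fun j => Finset.min'_le _ _
        (Finset.mem_insert.mpr (Or.inr (Finset.mem_image_of_mem D (Finset.mem_univ j))))
  obtain ⟨Rm, hRm0, hRmR⟩ : ∃ Rm : ℝ, 0 < Rm ∧ ∀ k, Rm ≤ R k := by
    refine ⟨(insert 1 (Finset.univ.image R)).min' (Finset.insert_nonempty _ _), ?_, ?_⟩
    · have hmem := (insert 1 (Finset.univ.image R)).min'_mem (Finset.insert_nonempty _ _)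
      rcases Finset.mem_insert.mp hmem with h | h
      · rw [h]; norm_num
      · obtain ⟨j, -, hj⟩ := Finset.mem_image.mp h
        rw [← hj]; exact hR j
    · exact fun k => Finset.min'_le _ _
        (Finset.mem_insert.mpr (Or.inr (Finset.mem_image_of_mem R (Finset.mem_univ k))))
  obtain ⟨m, hm0, hmεδ, hmRm⟩ : ∃ m : ℝ, 0 < m ∧ m ≤ ε * δm / 2 ∧ m ≤ Rm :=
    ⟨min (ε * δm / 2) Rm, lt_min (by positivity) hRm0, min_le_left _ _, min_le_right _ _⟩
  obtain ⟨w, hw⟩ := hWne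
  -- basic facts about z
  have hMle : ∀ k, en (Ihat k) z ≤ R k := by
    intro k
    have hcl : closure U ⊆ {x | en (Ihat k) x ≤ R k} :=
      closure_minimal (by rw [hU]; exact fun x hx => (hx.1 k).le)
        (isClosed_le (en_continuous _) continuous_const)
    exact hcl hzU
  have hzW : z ∈ closure W := closure_mono (by rw [hU]; exact fun x hx => hx.2) hzU
  intro r hr
  
  -- constants depending on r
  obtain ⟨M, hMeq⟩ : ∃ M : Fin ℓ → ℝ, ∀ k, M k = en (Ihat k) z :=
    ⟨fun k => en (Ihat k) z, fun _ => rfl⟩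
  have hM0 : ∀ k, 0 ≤ M k := fun k => (hMeq k) ▸ en_nonneg _ _
  have hMR : ∀ k, M k ≤ R k := fun k => (hMeq k) ▸ hMle k
  obtain ⟨C, hC0, hCk, hCw⟩ : ∃ C : ℝ, 0 ≤ C ∧
      (∀ k : Fin ℓ, 3 * ((d k : ℝ) + 1) * ‖z‖ + (M k + m) * ‖g k‖ ≤ C) ∧ ‖z - w‖ ≤ C := by
    have htermnn : ∀ k : Fin ℓ, 0 ≤ 3 * ((d k : ℝ) + 1) * ‖z‖ + (M k + m) * ‖g k‖ := by
      intro k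
      have hq : (0:ℝ) ≤ 3 * ((d k : ℝ) + 1) :=
        mul_nonneg (by norm_num) (add_nonneg (Nat.cast_nonneg _) zero_le_one)
      exact add_nonneg (mul_nonneg hq (norm_nonneg z))
        (mul_nonneg (add_nonneg (hM0 k) hm0.le) (norm_nonneg _))
    have hsumnn : 0 ≤ ∑ k : Fin ℓ, (3 * ((d k : ℝ) + 1) * ‖z‖ + (M k + m) * ‖g k‖) :=
      Finset.sum_nonneg fun k _ => htermnn k
    refine ⟨‖z - w‖ + ∑ k : Fin ℓ, (3 * ((d k : ℝ) + 1) * ‖z‖ + (M k + m) * ‖g k‖), ?_, ?_, ?_⟩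
    · have := norm_nonneg (z - w); linarith
    · intro k
      have hle : 3 * ((d k : ℝ) + 1) * ‖z‖ + (M k + m) * ‖g k‖ ≤
          ∑ k : Fin ℓ, (3 * ((d k : ℝ) + 1) * ‖z‖ + (M k + m) * ‖g k‖) :=
        Finset.single_le_sum (fun k _ => htermnn k) (Finset.mem_univ k)
      have := norm_nonneg (z - w); linarith
    · linarith
  obtain ⟨t, ht0, ht14, htm1, htC⟩ :
      ∃ t : ℝ, 0 < t ∧ t ≤ 1/4 ∧ t * m ≤ 1 ∧ t * C < r := by
    refine ⟨min (min (1/4) (1/(m+1))) (r/(C+1)), ?_, ?_, ?_, ?_⟩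
    · exact lt_min (lt_min (by norm_num) (div_pos one_pos (by linarith))) (div_pos hr (by linarith))
    · exact le_trans (min_le_left _ _) (min_le_left _ _)
    · have h1 : min (min (1/4) (1/(m+1))) (r/(C+1)) ≤ 1/(m+1) :=
        le_trans (min_le_left _ _) (min_le_right _ _)
      have h2 : min (min (1/4) (1/(m+1))) (r/(C+1)) * m ≤ (1/(m+1)) * m :=
        mul_le_mul_of_nonneg_right h1 hm0.le
      have h3 : (1/(m+1)) * m ≤ 1 := by
        rw [div_mul_eq_mul_div, div_le_one (by linarith)]; linarith
      linarith
    · have htr : min (min (1/4) (1/(m+1))) (r/(C+1)) ≤ r/(C+1) := min_le_right _ _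
      have h2 : min (min (1/4) (1/(m+1))) (r/(C+1)) * C ≤ (r/(C+1)) * C :=
        mul_le_mul_of_nonneg_right htr hC0
      have h3 : (r/(C+1)) * C < r := by
        rw [div_mul_eq_mul_div, div_lt_iff₀ (by linarith)]
        nlinarith
      linarith
  have ht1 : t ≤ 1 := ht14.trans (by norm_num)
  have h3t : 0 < 1 - 3*t := by linarith
  -- the scaling data
  obtain ⟨a, ha0, ha1, ha3, hashrink, haa⟩ : ∃ a : Fin ℓ → ℝ, (∀ k, 0 < a k) ∧ (∀ k, a k ≤ 1) ∧
      (∀ k, a k ≤ 1 - 3*t) ∧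
      (∀ k, 1 - a k ≤ 3*t*((d k : ℝ) + 1)) ∧
      (∀ β j, I β ⊂ I j → a β ≤ (1 - 3*t) * a j) := by
    refine ⟨fun k => (1 - 3*t)^(d k + 1), fun k => pow_pos h3t _,
      fun k => pow_le_one₀ h3t.le (by linarith), fun k => by
        calc (1 - 3*t)^(d k + 1) ≤ (1 - 3*t)^1 :=
              pow_le_pow_of_le_one h3t.le (by linarith) (by omega)
          _ = 1 - 3*t := pow_one _, ?_, ?_⟩
    · intro k
      have hb : 1 + ((d k + 1 : ℕ) : ℝ) * (-(3*t)) ≤ (1 + (-(3*t)))^(d k + 1) :=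
        one_add_mul_le_pow (by linarith) _
      have h2 : (1 + (-(3*t)))^(d k + 1) = (1 - 3*t)^(d k + 1) := by
        rw [show (1 + (-(3*t))) = 1 - 3*t by ring]
      push_cast at hb
      rw [h2] at hb
      linarith
    · intro β j h
      have h1 : (1 - 3*t)^(d β + 1) ≤ (1-3*t)^(d j + 1 + 1) :=
        pow_le_pow_of_le_one h3t.le (by linarith) (by have := hdmono β j h; omega)
      calc (1 - 3*t)^(d β + 1) ≤ (1-3*t)^(d j + 1 + 1) := h1
        _ = (1-3*t) * (1 - 3*t)^(d j + 1) := by ring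
  obtain ⟨η, hη0, hηtm, hηη⟩ : ∃ η : Fin ℓ → ℝ, (∀ k, 0 < η k) ∧ (∀ k, η k ≤ t * m) ∧
      (∀ β j, I β ⊂ I j → η β ≤ (t*m) * η j) := by
    refine ⟨fun k => (t*m)^(d k + 1), fun k => pow_pos (mul_pos ht0 hm0) _, ?_, ?_⟩
    · intro k
      calc (t*m)^(d k + 1) ≤ (t*m)^1 :=
            pow_le_pow_of_le_one (mul_pos ht0 hm0).le htm1 (by omega)
        _ = t*m := pow_one _
    · intro β j h
      have h1 : (t*m)^(d β + 1) ≤ (t*m)^(d j + 1 + 1) :=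
        pow_le_pow_of_le_one (mul_pos ht0 hm0).le htm1 (by have := hdmono β j h; omega)
      calc (t*m)^(d β + 1) ≤ (t*m)^(d j + 1 + 1) := h1
        _ = (t*m) * (t*m)^(d j + 1) := by ring
  obtain ⟨A, hAeq⟩ : ∃ A : Fin ℓ → ℝ, ∀ k, A k = a k * M k :=
    ⟨fun k => a k * M k, fun _ => rfl⟩
  have hA0 : ∀ k, 0 ≤ A k := fun k => (hAeq k) ▸ mul_nonneg (ha0 k).le (hM0 k)
  have hAM : ∀ k, A k ≤ M k := by
    intro k
    rw [hAeq k]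
    calc a k * M k ≤ 1 * M k := mul_le_mul_of_nonneg_right (ha1 k) (hM0 k)
      _ = M k := one_mul _
  obtain ⟨s, hscases⟩ : ∃ s : Fin ℓ → ℝ, ∀ k,
      (k ∈ P ∧ δm/2 * η k ≤ A k ∧ s k = t * A k) ∨
      (k ∈ P ∧ A k < δm/2 * η k ∧ s k = η k) ∨ (k ∉ P ∧ s k = 0) := by
    refine ⟨fun k => if k ∈ P then (if δm/2 * η k ≤ A k then t * A k else η k) else 0, ?_⟩
    intro k
    by_cases hp : k ∈ P
    · by_cases hc : δm/2 * η k ≤ A k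
      · exact Or.inl ⟨hp, hc, by simp only [if_pos hp, if_pos hc]⟩
      · exact Or.inr (Or.inl ⟨hp, not_le.mp hc, by simp only [if_pos hp, if_neg hc]⟩)
    · exact Or.inr (Or.inr ⟨hp, by simp only [if_neg hp]⟩)
  have hs0 : ∀ k, 0 ≤ s k := by
    intro k
    rcases hscases k with ⟨-, -, h⟩ | ⟨-, -, h⟩ | ⟨-, h⟩ <;> rw [h]
    · exact mul_nonneg ht0.le (hA0 k)
    · exact (hη0 k).le
  have hsP : ∀ j ∈ P, 0 < s j := by
    intro j hj
    rcases hscases j with ⟨-, hc, h⟩ | ⟨-, -, h⟩ | ⟨hn, -⟩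
    · rw [h]
      have hp : 0 < δm/2 * η j := mul_pos (by linarith) (hη0 j)
      exact mul_pos ht0 (lt_of_lt_of_le hp hc)
    · rw [h]; exact hη0 j
    · exact absurd hj hn
  have hsM : ∀ k, s k ≤ t * (M k + m) := by
    intro k
    rcases hscases k with ⟨-, -, h⟩ | ⟨-, -, h⟩ | ⟨-, h⟩ <;> rw [h]
    · have := hAM k
      nlinarith [ht0.le, hm0.le]
    · have := hηtm k
      nlinarith [hM0 k, ht0.le]
    · exact mul_nonneg ht0.le (add_nonneg (hM0 k) hm0.le)
  
  -- the approximating point y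
  obtain ⟨y, hy1, hy2⟩ : ∃ y : Fin n → ℂ,
      (∀ k, ∀ i ∈ Ihat k, y i = (a k : ℂ) * z i + (s k : ℂ) * g k i) ∧
      (∀ i, (∀ k, i ∉ Ihat k) → y i = ((1 - t : ℝ) : ℂ) * z i + (t : ℂ) * w i) := by
    refine ⟨fun i => if h : ∃ k, i ∈ Ihat k
        then (a h.choose : ℂ) * z i + (s h.choose : ℂ) * g h.choose i
        else ((1 - t : ℝ) : ℂ) * z i + (t : ℂ) * w i, ?_, ?_⟩
    · intro k i hi
      have hex : ∃ k', i ∈ Ihat k' := ⟨k, hi⟩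
      have hck : hex.choose = k := by
        by_contra hne
        exact hdisj _ _ hne i hex.choose_spec hi
      simp only [dif_pos hex, hck]
    · intro i hni
      have hex : ¬ ∃ k, i ∈ Ihat k := fun h => hni h.choose h.choose_spec
      simp only [dif_neg hex]
  have hyk : ∀ k, ∀ i ∈ Ihat k, (a k • z + s k • g k) i = y i := by
    intro k i hi
    rw [hy1 k i hi]
    simp [Complex.real_smul]
  have heny : ∀ k, en (Ihat k) y = en (Ihat k) (a k • z + s k • g k) :=
    fun k => (en_congr _ (hyk k)).symm
  have henz : ∀ k, en (Ihat k) (a k • z) = A k := by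
    intro k
    rw [en_smul _ _ (ha0 k).le, ← hMeq k, ← hAeq k]
  have heng : ∀ k, en (Ihat k) (s k • g k) = s k := by
    intro k
    rw [en_smul _ _ (hs0 k), hg1 k, mul_one]
  have hupper : ∀ k, en (Ihat k) y ≤ A k + s k := by
    intro k
    rw [heny k]
    calc en (Ihat k) (a k • z + s k • g k)
        ≤ en (Ihat k) (a k • z) + en (Ihat k) (s k • g k) := en_add_le _ _ _
      _ = A k + s k := by rw [henz k, heng k]
  have hlow1 : ∀ k, A k - s k ≤ en (Ihat k) y := by
    intro k
    rw [heny k]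
    have h := en_sub_le (Ihat k) (a k • z) (s k • g k)
    rwa [henz k, heng k] at h
  have hcloz : ∀ j ∈ P, (a j • z) ∈ closure (G j) := fun j hj =>
    closure_smul_mem (hGcone j) (hzG j hj) (ha0 j)
  have hing : ∀ j ∈ P, (s j • g j) ∈ G j := fun j hj => hGcone j _ (hgG j) _ (hsP j hj)
  have hlow2 : ∀ j ∈ P, δm * (A j + s j) ≤ en (Ihat j) y := by
    intro j hj
    rw [heny j]
    have hin := hDin j _ (hcloz j hj) _ (subset_closure (hing j hj))
    rw [henz j, heng j] at hin
    have h2 : δm * (A j + s j) ≤ D j * (A j + s j) :=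
      mul_le_mul_of_nonneg_right (hδmD j) (add_nonneg (hA0 j) (hs0 j))
    linarith
  have hymemG : ∀ j ∈ P, y ∈ G j := by
    intro j hj
    have hsum : a j • z + s j • g j ∈ G j :=
      cone_add_mem (hGopen j) (hGconv j) (hGcone j) (hcloz j hj) (hing j hj)
    exact (hGdep j _ y (hyk j)).mp hsum
  -- membership in W
  have hymemW : y ∈ W := by
    have hcombo : t • w + (1-t) • z ∈ interior W :=
      hWconv.combo_interior_closure_mem_interior (by rwa [hWopen.interior_eq]) hzW ht0
        (by linarith) (by ring)
    rw [hWopen.interior_eq] at hcombo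
    refine (hWdep _ y ?_).mp hcombo
    intro i hi
    have hni : ∀ k, i ∉ Ihat k := fun k hk => hi k (hsub k hk)
    rw [hy2 i hni]
    simp [Complex.real_smul]
    ring
  -- membership in U
  have hyU : y ∈ U := by
    rw [hU]
    refine ⟨fun k => ?_, hymemW⟩
    refine lt_of_le_of_lt (hupper k) ?_
    have e1 : a k * M k ≤ (1 - 3*t) * M k := mul_le_mul_of_nonneg_right (ha3 k) (hM0 k)
    have e2 : (1 - 3*t) * M k ≤ (1 - 3*t) * R k :=
      mul_le_mul_of_nonneg_left (hMR k) h3t.le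
    rcases hscases k with ⟨-, -, h⟩ | ⟨-, -, h⟩ | ⟨-, h⟩ <;> rw [h, hAeq k]
    · have e3 : t * (a k * M k) ≤ t * ((1-3*t) * R k) := by
        apply mul_le_mul_of_nonneg_left _ ht0.le
        linarith
      nlinarith [hR k, ht0, ht14, mul_pos ht0 (hR k), mul_nonneg (mul_nonneg ht0.le ht0.le) (hR k).le]
    · have e3 : η k ≤ t * R k := by
        have := hηtm k
        have h4 : t * m ≤ t * R k := by
          apply mul_le_mul_of_nonneg_left _ ht0.le
          linarith [hmRm, hRmR k]
        linarith
      nlinarith [hR k, ht0]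
    · nlinarith [hR k, ht0]
  -- the pair inequalities
  have hpair : ∀ j ∈ P, ∀ β, I β ⊂ I j → en (Ihat β) y < ε * en (Ihat j) y := by
    intro j hj β hβ
    have hMM : M β ≤ ε * M j := by rw [hMeq β, hMeq j]; exact hzn j hj β hβ
    have hAA : A β ≤ (1-3*t) * (ε * A j) := by
      rw [hAeq β, hAeq j]
      calc a β * M β ≤ ((1-3*t) * a j) * (ε * M j) :=
            mul_le_mul (haa β j hβ) hMM (hM0 β) (mul_nonneg (by linarith) (ha0 j).le)
        _ = (1-3*t) * (ε * (a j * M j)) := by ring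
    have hεA0 : 0 ≤ ε * A j := mul_nonneg hε.le (hA0 j)
    have hAβ' : A β ≤ ε * A j := by nlinarith [hεA0, ht0]
    have hηβ : η β ≤ (t*m) * η j := hηη β j hβ
    have htm2 : t * m ≤ t * (ε * δm / 2) := mul_le_mul_of_nonneg_left hmεδ ht0.le
    rcases hscases j with ⟨-, hc, hsj⟩ | ⟨-, hc, hsj⟩ | ⟨hn, -⟩
    · -- region I : s j = t * A j
      have hAj0 : 0 < A j := lt_of_lt_of_le (mul_pos (by linarith) (hη0 j)) hc
      have hlow : (1 - t) * A j ≤ en (Ihat j) y := by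
        have := hlow1 j
        rw [hsj] at this
        linarith
      have hεlow : ε * ((1-t) * A j) ≤ ε * en (Ihat j) y :=
        mul_le_mul_of_nonneg_left hlow hε.le
      have hstep : A β + s β < ε * ((1-t) * A j) := by
        -- η j ≤ (2/δm) * A j, i.e. δm * η j ≤ 2 * A j
        have hη2A : δm * η j ≤ 2 * A j := by linarith
        rcases hscases β with ⟨-, -, hsβ⟩ | ⟨-, -, hsβ⟩ | ⟨-, hsβ⟩ <;> rw [hsβ]
        · -- s β = t * A β : total (1+t) A β ≤ (1+t)(1-3t) ε A j < (1-t) ε A j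
          have q1 : A β + t * A β ≤ (1+t) * ((1-3*t)*(ε * A j)) := by nlinarith [hAA, ht0]
          nlinarith [mul_pos hε hAj0, ht0, ht14]
        · -- s β = η β ≤ (t*m) η j ≤ t (ε δm/2) η j = (t ε /2)(δm η j) ≤ t ε A j
          have q1 : η β ≤ t * (ε * δm / 2) * η j := by
            have := mul_le_mul_of_nonneg_right htm2 (hη0 j).le
            linarith
          have q2 : t * (ε * δm / 2) * η j ≤ t * ε * A j := by
            have hq := mul_le_mul_of_nonneg_left hη2A (mul_nonneg ht0.le hε.le)
            nlinarith [hq]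
          nlinarith [mul_pos hε hAj0, ht0]
        · nlinarith [mul_pos hε hAj0, ht0]
      calc en (Ihat β) y ≤ A β + s β := hupper β
        _ < ε * ((1-t) * A j) := hstep
        _ ≤ ε * en (Ihat j) y := hεlow
    · -- region II : s j = η j
      have hlow : δm * (A j + η j) ≤ en (Ihat j) y := by
        have := hlow2 j hj
        rwa [hsj] at this
      have hεlow : ε * (δm * (A j + η j)) ≤ ε * en (Ihat j) y :=
        mul_le_mul_of_nonneg_left hlow hε.le
      have hstep : A β + s β < ε * (δm * (A j + η j)) := by
        have e1 : ε * A j < ε * (δm/2 * η j) := mul_lt_mul_of_pos_left hc hε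
        have e2 : A β < ε * (δm/2 * η j) := lt_of_le_of_lt hAβ' e1
        have e3 : 0 < ε * (δm/2 * η j) := lt_of_le_of_lt hεA0 e1
        rcases hscases β with ⟨-, -, hsβ⟩ | ⟨-, -, hsβ⟩ | ⟨-, hsβ⟩ <;> rw [hsβ]
        · -- s β = t * A β ≤ t * ε * (δm/2 η j)
          have q1 : t * A β ≤ t * (ε * (δm/2 * η j)) :=
            mul_le_mul_of_nonneg_left (le_of_lt e2) ht0.le
          nlinarith [ht0, ht1, e2, hεA0, mul_nonneg hε.le (mul_nonneg hδm0.le (hA0 j))]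
        · -- s β = η β ≤ (t m) η j ≤ t (ε δm/2) η j
          have q1 : η β ≤ t * (ε * δm / 2) * η j := by
            have := mul_le_mul_of_nonneg_right htm2 (hη0 j).le
            linarith
          nlinarith [ht0, ht1, e2, mul_nonneg hε.le (mul_nonneg hδm0.le (hA0 j)), hη0 j]
        · nlinarith [e2, mul_nonneg hε.le (mul_nonneg hδm0.le (hA0 j)), hη0 j, hδm0, hε]
      calc en (Ihat β) y ≤ A β + s β := hupper β
        _ < ε * (δm * (A j + η j)) := hstep
        _ ≤ ε * en (Ihat j) y := hεlow
    · exact absurd hj hn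
  -- distance estimate
  have hdist : dist z y < r := by
    rw [dist_eq_norm]
    refine (pi_norm_lt_iff hr).mpr fun i => ?_
    rw [Pi.sub_apply]
    by_cases hex : ∃ k, i ∈ Ihat k
    · obtain ⟨k, hik⟩ := hex
      rw [hy1 k i hik]
      have e1 : z i - ((a k : ℂ) * z i + (s k : ℂ) * g k i)
          = ((1 - a k : ℝ) : ℂ) * z i - (s k : ℂ) * g k i := by
        push_cast; ring
      rw [e1]
      have e2 : ‖((1 - a k : ℝ) : ℂ) * z i - (s k : ℂ) * g k i‖
          ≤ (1 - a k) * ‖z i‖ + s k * ‖g k i‖ := by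
        refine le_trans (norm_sub_le _ _) ?_
        rw [norm_mul, norm_mul, Complex.norm_real, Complex.norm_real,
          Real.norm_eq_abs, Real.norm_eq_abs, abs_of_nonneg (by linarith [ha1 k]),
          abs_of_nonneg (hs0 k)]
      have e3 : (1 - a k) * ‖z i‖ ≤ (3*t*((d k : ℝ)+1)) * ‖z‖ := by
        apply mul_le_mul (hashrink k) (norm_le_pi_norm z i) (norm_nonneg _)
        have : (0:ℝ) ≤ (d k : ℝ) + 1 := add_nonneg (Nat.cast_nonneg _) zero_le_one
        nlinarith [ht0]
      have e4 : s k * ‖g k i‖ ≤ (t * (M k + m)) * ‖g k‖ :=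
        mul_le_mul (hsM k) (norm_le_pi_norm (g k) i) (norm_nonneg _)
          (mul_nonneg ht0.le (add_nonneg (hM0 k) hm0.le))
      have e5 : (3*t*((d k : ℝ)+1)) * ‖z‖ + (t * (M k + m)) * ‖g k‖
          = t * (3*((d k : ℝ)+1)*‖z‖ + (M k + m)*‖g k‖) := by ring
      have e6 : t * (3*((d k : ℝ)+1)*‖z‖ + (M k + m)*‖g k‖) ≤ t * C :=
        mul_le_mul_of_nonneg_left (hCk k) ht0.le
      linarith
    · rw [hy2 i (fun k hk => hex ⟨k, hk⟩)]
      have e1 : z i - (((1 - t : ℝ) : ℂ) * z i + (t:ℂ) * w i) = (t:ℂ) * (z i - w i) := by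
        push_cast; ring
      rw [e1, norm_mul, Complex.norm_real, Real.norm_eq_abs, abs_of_nonneg ht0.le]
      have e2 : ‖z i - w i‖ ≤ ‖z - w‖ := by
        have := norm_le_pi_norm (z - w) i
        rwa [Pi.sub_apply] at this
      have e3 : t * ‖z i - w i‖ ≤ t * C :=
        mul_le_mul_of_nonneg_left (le_trans e2 hCw) ht0.le
      linarith
  refine ⟨y, fun j hj => ?_, hdist⟩
  rw [hV j]
  exact ⟨hyU, hymemG j hj, fun β hβ => hpair j hj β hβ⟩


set_option maxHeartbeats 1000000 in
/-- Lemma 7.2: `closure S = closure V₁ ∩ ⋯ ∩ closure V_ℓ`, and each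
`closure (V j)` is `{z ∈ closure U : z ∈ closure (G j), |z_{Î β}| ≤ ε |z_{Î j}| for I β ⊊ I j}`. -/
theorem stmt_6
    (n ℓ : ℕ) (I : Fin ℓ → Finset (Fin n))
    (h1 : ∀ j k, j ≠ k → I j ⊂ I k ∨ I k ⊂ I j ∨ Disjoint (I j) (I k))
    (h2 : ∀ j, (Finset.univ.filter (fun k => I k ⊂ I j)).biUnion I ⊂ I j)
    (Ihat : Fin ℓ → Finset (Fin n))
    (hIhat : ∀ j, Ihat j = I j \ (Finset.univ.filter (fun k => I k ⊂ I j)).biUnion I)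
    (nrm : Finset (Fin n) → (Fin n → ℂ) → ℝ)
    (hnrm : ∀ A z, nrm A z = Real.sqrt (∑ i ∈ A, ‖z i‖ ^ 2))
    (G : Fin ℓ → Set (Fin n → ℂ))
    (hGopen : ∀ j, IsOpen (G j))
    (hGconv : ∀ j, Convex ℝ (G j))
    (hGcone : ∀ j, ∀ z ∈ G j, ∀ c : ℝ, 0 < c → c • z ∈ G j)
    (hGne : ∀ j, (G j).Nonempty)
    (hG0 : ∀ j, (0 : Fin n → ℂ) ∉ G j)
    (hGdep : ∀ j, ∀ z w : Fin n → ℂ, (∀ i ∈ Ihat j, z i = w i) → (z ∈ G j ↔ w ∈ G j))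
    (hGproper : ∀ j, ∀ z, z ∈ closure (G j) → -z ∈ closure (G j) → ∀ i ∈ Ihat j, z i = 0)
    (R : Fin ℓ → ℝ) (hR : ∀ j, 0 < R j)
    (W : Set (Fin n → ℂ)) (hWconv : Convex ℝ W) (hWopen : IsOpen W) (hWne : W.Nonempty)
    (hWdep : ∀ z w : Fin n → ℂ, (∀ i, (∀ j, i ∉ I j) → z i = w i) → (z ∈ W ↔ w ∈ W))
    (U : Set (Fin n → ℂ))
    (hU : U = {z | (∀ j, nrm (Ihat j) z < R j) ∧ z ∈ W})
    (ε : ℝ) (hε : 0 < ε)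
    (V : Fin ℓ → Set (Fin n → ℂ))
    (hV : ∀ j, V j = {z ∈ U | z ∈ G j ∧ ∀ β, I β ⊂ I j → nrm (Ihat β) z < ε * nrm (Ihat j) z})
    (S : Set (Fin n → ℂ)) (hS : S = ⋂ j, V j)
    : closure S = ⋂ j, closure (V j) ∧
      ∀ j, closure (V j) =
        {z | z ∈ closure U ∧ z ∈ closure (G j) ∧
          ∀ β, I β ⊂ I j → nrm (Ihat β) z ≤ ε * nrm (Ihat j) z} := by
  classical
  have hnrm' : nrm = fun A z => en A z := funext fun A => funext fun z => hnrm A z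
  subst hnrm'
  have hU' : U = {z | (∀ j, en (Ihat j) z < R j) ∧ z ∈ W} := hU
  have hV' : ∀ j, V j =
      {z ∈ U | z ∈ G j ∧ ∀ β, I β ⊂ I j → en (Ihat β) z < ε * en (Ihat j) z} := hV
  have hVC : ∀ j, V j ⊆ {z | z ∈ closure U ∧ z ∈ closure (G j) ∧
      ∀ β, I β ⊂ I j → en (Ihat β) z ≤ ε * en (Ihat j) z} := by
    intro j x hx
    rw [hV' j] at hx
    exact ⟨subset_closure hx.1, subset_closure hx.2.1, fun β hβ => (hx.2.2 β hβ).le⟩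
  have hCclosed : ∀ j, IsClosed {z | z ∈ closure U ∧ z ∈ closure (G j) ∧
      ∀ β, I β ⊂ I j → en (Ihat β) z ≤ ε * en (Ihat j) z} := by
    intro j
    have h3 : IsClosed {z : Fin n → ℂ | ∀ β, I β ⊂ I j →
        en (Ihat β) z ≤ ε * en (Ihat j) z} := by
      have heq : {z : Fin n → ℂ | ∀ β, I β ⊂ I j → en (Ihat β) z ≤ ε * en (Ihat j) z} =
          ⋂ β, {z : Fin n → ℂ | I β ⊂ I j → en (Ihat β) z ≤ ε * en (Ihat j) z} := by
        ext x; simp [Set.mem_iInter]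
      rw [heq]
      refine isClosed_iInter fun β => ?_
      by_cases hβ : I β ⊂ I j
      · have heq2 : {z : Fin n → ℂ | I β ⊂ I j → en (Ihat β) z ≤ ε * en (Ihat j) z} =
            {z : Fin n → ℂ | en (Ihat β) z ≤ ε * en (Ihat j) z} := by
          ext x; simp [hβ]
        rw [heq2]
        exact isClosed_le (en_continuous _) (continuous_const.mul (en_continuous _))
      · have heq2 : {z : Fin n → ℂ | I β ⊂ I j → en (Ihat β) z ≤ ε * en (Ihat j) z} =
            Set.univ := by
          ext x; simp [hβ]
        rw [heq2]
        exact isClosed_univ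
    exact IsClosed.inter isClosed_closure (IsClosed.inter isClosed_closure h3)
  have hCV : ∀ j, {z | z ∈ closure U ∧ z ∈ closure (G j) ∧
      ∀ β, I β ⊂ I j → en (Ihat β) z ≤ ε * en (Ihat j) z} ⊆ closure (V j) := by
    intro j x hx
    rw [Metric.mem_closure_iff]
    intro r hr
    have hargG : ∀ j' ∈ ({j} : Set (Fin ℓ)), x ∈ closure (G j') := by
      intro j' hj'
      rw [Set.mem_singleton_iff] at hj'
      subst hj'
      exact hx.2.1
    have hargN : ∀ j' ∈ ({j} : Set (Fin ℓ)), ∀ β, I β ⊂ I j' →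
        en (Ihat β) x ≤ ε * en (Ihat j') x := by
      intro j' hj' β hβ
      rw [Set.mem_singleton_iff] at hj'
      subst hj'
      exact hx.2.2 β hβ
    obtain ⟨y, hyV, hyd⟩ := key I h1 Ihat hIhat G hGopen hGconv hGcone hGne hG0 hGdep
      hGproper R hR W hWconv hWopen hWne hWdep U hU' ε hε V hV' {j} x hx.1
      hargG hargN r hr
    exact ⟨y, hyV j rfl, hyd⟩
  have part2 : ∀ j, closure (V j) = {z | z ∈ closure U ∧ z ∈ closure (G j) ∧
      ∀ β, I β ⊂ I j → en (Ihat β) z ≤ ε * en (Ihat j) z} := fun j =>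
    Set.Subset.antisymm (closure_minimal (hVC j) (hCclosed j)) (hCV j)
  refine ⟨?_, part2⟩
  apply Set.Subset.antisymm
  · refine Set.subset_iInter fun j => closure_mono ?_
    rw [hS]
    exact Set.iInter_subset _ j
  · intro x hx
    rcases isEmpty_or_nonempty (Fin ℓ) with he | hne
    · rw [hS, Set.iInter_of_empty, closure_univ]
      trivial
    · have hxC : ∀ j, x ∈ {z | z ∈ closure U ∧ z ∈ closure (G j) ∧
          ∀ β, I β ⊂ I j → en (Ihat β) z ≤ ε * en (Ihat j) z} := fun j => by
        have := Set.mem_iInter.mp hx j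
        rwa [part2 j] at this
      obtain ⟨j0⟩ := hne
      rw [hS, Metric.mem_closure_iff]
      intro r hr
      obtain ⟨y, hyV, hyd⟩ := key I h1 Ihat hIhat G hGopen hGconv hGcone hGne hG0 hGdep
        hGproper R hR W hWconv hWopen hWne hWdep U hU' ε hε V hV' Set.univ x (hxC j0).1
        (fun j _ => (hxC j).2.1) (fun j _ β hβ => (hxC j).2.2 β hβ) r hr
      exact ⟨y, Set.mem_iInter.mpr (fun j => hyV j trivial), hyd⟩
end

section
/- Let $S=S(U,\{G_j\},\epsilon)$ be a proper multi-cone in $\mathbb{C}^n$ and for $J\subseteq\{1,\dots,\ell\}$ nonempty set $Z_J=\bigcap_{j\in J}Z_j$, $S_J=\mathrm{Int}_{Z_J}(\overline S\cap Z_J)$. Then $S_J=S(U\cap Z_J,\{G_j\}_{j\in J^*},\epsilon)$ is a nonempty open proper multi-cone in $Z_J$ for the family of submanifolds $\{Z_j\cap Z_J\}_{j\in J^*}$, where $J^*=\{j: I_j\not\subseteq I_J\}$ and $I_J=\bigcup_{j\in J}I_j$; moreover $I_j^*:=I_j\setminus I_J$ ($j\in J^*$) again satisfies conditions (1.2). 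-/
namespace S8
variable {n ℓ : ℕ} {I : Fin ℓ → Finset (Fin n)} {Ihat : Fin ℓ → Finset (Fin n)}
  {J : Finset (Fin ℓ)}

lemma subset_vanish (hIhat : ∀ j, Ihat j = I j \ (Finset.univ.filter (fun k => I k ⊂ I j)).biUnion I)
    {k j : Fin ℓ} (h : I k ⊂ I j) : Disjoint (I k) (Ihat j) := by
  rw [hIhat]
  refine Finset.disjoint_left.2 fun i hi hmem => ?_
  rcases Finset.mem_sdiff.1 hmem with ⟨_, hni⟩
  exact hni (Finset.mem_biUnion.2 ⟨k, Finset.mem_filter.2 ⟨Finset.mem_univ _, h⟩, hi⟩)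

lemma ihat_disj (h1 : ∀ j k, j ≠ k → I j ⊂ I k ∨ I k ⊂ I j ∨ Disjoint (I j) (I k))
    (hIhat : ∀ j, Ihat j = I j \ (Finset.univ.filter (fun k => I k ⊂ I j)).biUnion I)
    {j k : Fin ℓ} (hjk : j ≠ k) : Disjoint (Ihat j) (Ihat k) := by
  have hsubj : Ihat j ⊆ I j := by rw [hIhat]; exact Finset.sdiff_subset
  have hsubk : Ihat k ⊆ I k := by rw [hIhat]; exact Finset.sdiff_subset
  rcases h1 j k hjk with h | h | h
  · exact ((subset_vanish hIhat h).mono_left hsubj).symm.symm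
  · exact ((subset_vanish hIhat h).mono_left hsubk).symm
  · exact h.mono hsubj hsubk

lemma ihat_nonempty (h2 : ∀ j, (Finset.univ.filter (fun k => I k ⊂ I j)).biUnion I ⊂ I j)
    (hIhat : ∀ j, Ihat j = I j \ (Finset.univ.filter (fun k => I k ⊂ I j)).biUnion I)
    (j : Fin ℓ) : (Ihat j).Nonempty := by
  rw [hIhat]
  obtain ⟨i, hi, hni⟩ := Finset.exists_of_ssubset (h2 j)
  exact ⟨i, Finset.mem_sdiff.2 ⟨hi, hni⟩⟩

lemma ihat_disj_IJ (h1 : ∀ j k, j ≠ k → I j ⊂ I k ∨ I k ⊂ I j ∨ Disjoint (I j) (I k))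
    (hIhat : ∀ j, Ihat j = I j \ (Finset.univ.filter (fun k => I k ⊂ I j)).biUnion I)
    {j : Fin ℓ} (hj : ¬ I j ⊆ J.biUnion I) : Disjoint (Ihat j) (J.biUnion I) := by
  have hsubj : Ihat j ⊆ I j := by rw [hIhat]; exact Finset.sdiff_subset
  rw [Finset.disjoint_biUnion_right]
  intro k hk
  by_cases hjk : j = k
  · exact absurd (hjk ▸ Finset.subset_biUnion_of_mem I (hjk ▸ hk)) hj
  rcases h1 j k hjk with h | h | h
  · exact absurd (h.subset.trans (Finset.subset_biUnion_of_mem I hk)) hj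
  · exact (subset_vanish hIhat h).symm
  · exact h.mono_left hsubj

lemma lemC (h1 : ∀ j k, j ≠ k → I j ⊂ I k ∨ I k ⊂ I j ∨ Disjoint (I j) (I k))
    (h2 : ∀ j, (Finset.univ.filter (fun k => I k ⊂ I j)).biUnion I ⊂ I j)
    (hIhat : ∀ j, Ihat j = I j \ (Finset.univ.filter (fun k => I k ⊂ I j)).biUnion I)
    {j k : Fin ℓ} (hk : ¬ I k ⊆ J.biUnion I)
    (h : I j ⊂ I k) : I j \ J.biUnion I ⊂ I k \ J.biUnion I := by
  refine Finset.ssubset_iff_of_subset (Finset.sdiff_subset_sdiff h.subset le_rfl) |>.2 ?_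
  obtain ⟨i, hi⟩ := ihat_nonempty h2 hIhat k
  have hik : i ∈ I k := (by rw [hIhat] at hi; exact (Finset.mem_sdiff.1 hi).1)
  refine ⟨i, Finset.mem_sdiff.2 ⟨hik, Finset.disjoint_left.1 (ihat_disj_IJ h1 hIhat hk) hi⟩, ?_⟩
  intro hmem
  exact Finset.disjoint_left.1 (subset_vanish hIhat h) (Finset.mem_sdiff.1 hmem).1 hi

lemma lemC' (h1 : ∀ j k, j ≠ k → I j ⊂ I k ∨ I k ⊂ I j ∨ Disjoint (I j) (I k))
    (h2 : ∀ j, (Finset.univ.filter (fun k => I k ⊂ I j)).biUnion I ⊂ I j)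
    (hIhat : ∀ j, Ihat j = I j \ (Finset.univ.filter (fun k => I k ⊂ I j)).biUnion I)
    {j k : Fin ℓ} (hj : ¬ I j ⊆ J.biUnion I) (hk : ¬ I k ⊆ J.biUnion I)
    (h : I j \ J.biUnion I ⊂ I k \ J.biUnion I) : I j ⊂ I k := by
  have hne : (I j \ J.biUnion I).Nonempty := by
    rcases Finset.not_subset.1 hj with ⟨i, hi, hni⟩
    exact ⟨i, Finset.mem_sdiff.2 ⟨hi, hni⟩⟩
  obtain ⟨i, hi⟩ := hne
  have hik : i ∈ I k \ J.biUnion I := h.subset hi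
  have hjk : j ≠ k := by
    rintro rfl; exact (ssubset_irrefl _) h
  rcases h1 j k hjk with h' | h' | h'
  · exact h'
  · exact absurd h (by
      have := lemC (J := J) h1 h2 hIhat hj h'
      exact fun hh => (ssubset_irrefl _) (hh.trans this))
  · exact absurd (Finset.mem_sdiff.1 hik).1
      (Finset.disjoint_left.1 h' (Finset.mem_sdiff.1 hi).1)


variable {n : ℕ} {A : Finset (Fin n)} {z w : Fin n → ℂ}

noncomputable def nr {n : ℕ} (A : Finset (Fin n)) (z : Fin n → ℂ) : ℝ :=
  Real.sqrt (∑ i ∈ A, ‖z i‖ ^ 2)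

lemma nr_nonneg : 0 ≤ nr A z := Real.sqrt_nonneg _

lemma nr_congr (h : ∀ i ∈ A, z i = w i) : nr A z = nr A w := by
  unfold nr; congr 1; exact Finset.sum_congr rfl fun i hi => by rw [h i hi]

lemma nr_eq_zero_iff : nr A z = 0 ↔ ∀ i ∈ A, z i = 0 := by
  unfold nr
  rw [Real.sqrt_eq_zero (Finset.sum_nonneg fun i _ => sq_nonneg _)]
  rw [Finset.sum_eq_zero_iff_of_nonneg fun i _ => sq_nonneg _]
  constructor
  · intro h i hi
    have := h i hi
    simpa using this
  · intro h i hi; simp [h i hi]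

lemma nr_pos_of_ne (i : Fin n) (hi : i ∈ A) (hz : z i ≠ 0) : 0 < nr A z := by
  rcases lt_or_eq_of_le (nr_nonneg (A := A) (z := z)) with h | h
  · exact h
  · exact absurd (nr_eq_zero_iff.1 h.symm i hi) hz

lemma nr_smul (r : ℝ) : nr A (r • z) = |r| * nr A z := by
  unfold nr
  have : ∀ i ∈ A, ‖(r • z) i‖ ^ 2 = r ^ 2 * ‖z i‖ ^ 2 := by
    intro i _
    simp only [Pi.smul_apply, norm_smul, Real.norm_eq_abs, mul_pow]
    rw [sq_abs]
  rw [Finset.sum_congr rfl this, ← Finset.mul_sum, Real.sqrt_mul (sq_nonneg r),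
    Real.sqrt_sq_eq_abs]

lemma continuous_nr : Continuous (nr (n := n) A) := by
  unfold nr
  exact Real.continuous_sqrt.comp
    (continuous_finset_sum _ fun i _ => ((continuous_norm.comp (continuous_apply i)).pow 2))


open Metric

lemma mem_of_interior_closure {E : Type*} [NormedAddCommGroup E] [NormedSpace ℝ E]
    {s : Set E} (hconv : Convex ℝ s) (hso : IsOpen s) (hne : s.Nonempty)
    {x : E} (hx : x ∈ interior (closure s)) : x ∈ s := by
  obtain ⟨y, hy⟩ := hne
  rw [mem_interior_iff_mem_nhds, Metric.mem_nhds_iff] at hx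
  obtain ⟨δ, hδ, hball⟩ := hx
  set σ : ℝ := δ / (2 * (‖x - y‖ + 1)) with hσdef
  have hnorm1 : (0:ℝ) < ‖x - y‖ + 1 := by positivity
  have hσ : 0 < σ := by positivity
  set x' : E := x + σ • (x - y) with hx'def
  have hx' : x' ∈ closure s := by
    apply hball
    rw [mem_ball, dist_eq_norm]
    have : x' - x = σ • (x - y) := by rw [hx'def]; abel
    rw [this, norm_smul, Real.norm_eq_abs, abs_of_pos hσ]
    calc σ * ‖x - y‖ ≤ σ * (‖x - y‖ + 1) := by
          exact mul_le_mul_of_nonneg_left (by linarith) hσ.le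
      _ = δ / 2 := by rw [hσdef]; field_simp
      _ < δ := by linarith
  have hc : (1 + σ) ≠ 0 := by positivity
  have key : (σ / (1 + σ)) • y + (1 / (1 + σ)) • x' = x := by
    rw [div_eq_mul_inv, one_div, mul_comm, mul_smul, ← smul_add, inv_smul_eq_iff₀ hc,
      hx'def, smul_sub, add_smul, one_smul]
    abel
  have := hconv.combo_interior_closure_mem_interior
    (by rwa [hso.interior_eq] : y ∈ interior s) hx'
    (by positivity : (0:ℝ) < σ / (1 + σ)) (by positivity : (0:ℝ) ≤ 1 / (1 + σ))
    (by field_simp; ring)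
  rw [key, hso.interior_eq] at this
  exact this

variable {n : ℕ}

lemma closure_dep {G : Set (Fin n → ℂ)} {A : Set (Fin n)}
    (hdep : ∀ z w : Fin n → ℂ, (∀ i ∈ A, z i = w i) → (z ∈ G ↔ w ∈ G))
    (z w : Fin n → ℂ) (h : ∀ i ∈ A, z i = w i) (hz : z ∈ closure G) : w ∈ closure G := by
  set v : Fin n → ℂ := w - z with hv
  have hv0 : ∀ i ∈ A, v i = 0 := fun i hi => by simp [hv, (h i hi).symm]
  have himg : (fun x => x + v) '' G = G := by
    ext x
    constructor
    · rintro ⟨u, hu, rfl⟩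
      exact (hdep u (u + v) (fun i hi => by simp [hv0 i hi])).1 hu
    · intro hx
      refine ⟨x - v, (hdep x (x - v) (fun i hi => by simp [hv0 i hi])).1 hx, sub_add_cancel x v⟩
  have : w = z + v := by rw [hv]; abel
  rw [this]
  have h2 : (fun x => x + v) '' closure G = closure ((fun x => x + v) '' G) :=
    (Homeomorph.addRight v).image_closure G
  rw [himg] at h2
  exact h2 ▸ ⟨z, hz, rfl⟩

lemma mem_of_cyl {G : Set (Fin n → ℂ)} {A : Set (Fin n)} {z : Fin n → ℂ} {δ : ℝ} (hδ : 0 < δ)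
    (hGo : IsOpen G) (hGc : Convex ℝ G) (hGne : G.Nonempty)
    (hdep : ∀ z w : Fin n → ℂ, (∀ i ∈ A, z i = w i) → (z ∈ G ↔ w ∈ G))
    (hz : ∀ v : Fin n → ℂ, (∀ i, i ∉ A → v i = z i) → dist v z < δ → v ∈ closure G) :
    z ∈ G := by
  classical
  have hball : Metric.ball z δ ⊆ closure G := by
    intro w hw
    rw [mem_ball] at hw
    set w' : Fin n → ℂ := fun i => if i ∈ A then w i else z i with hw'
    have h1 : w' ∈ closure G := by
      apply hz
      · intro i hi; simp [hw', hi]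
      · rw [dist_pi_lt_iff hδ]
        intro i
        by_cases hi : i ∈ A
        · simp only [hw', hi, if_pos]
          exact lt_of_le_of_lt (dist_le_pi_dist w z i) hw
        · simp [hw', hi, hδ]
    exact closure_dep hdep w' w (fun i hi => by simp [hw', hi]) h1
  have : z ∈ interior (closure G) :=
    mem_interior_iff_mem_nhds.2 (Filter.mem_of_superset (Metric.ball_mem_nhds z hδ) hball)
  exact mem_of_interior_closure hGc hGo hGne this

end S8
open Filter Topology in
set_option maxHeartbeats 4000000 in
/-- Lemma 7.1, 1.: for nonempty `J`, the trace `S_J`, the relative interior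
of `closure S ∩ Z_J` in `Z_J`, is a nonempty multi-cone in `Z_J`: it equals
`S(U ∩ Z_J, {G j}_{j ∈ J*}, ε)` for `J* = {j : ¬ I j ⊆ I_J}`, and the restricted family
`I j \ I_J` (`j ∈ J*`) again satisfies conditions (1.2). -/
theorem stmt_8
    (n ℓ : ℕ) (I : Fin ℓ → Finset (Fin n))
    (h1 : ∀ j k, j ≠ k → I j ⊂ I k ∨ I k ⊂ I j ∨ Disjoint (I j) (I k))
    (h2 : ∀ j, (Finset.univ.filter (fun k => I k ⊂ I j)).biUnion I ⊂ I j)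
    (Ihat : Fin ℓ → Finset (Fin n))
    (hIhat : ∀ j, Ihat j = I j \ (Finset.univ.filter (fun k => I k ⊂ I j)).biUnion I)
    (nrm : Finset (Fin n) → (Fin n → ℂ) → ℝ)
    (hnrm : ∀ A z, nrm A z = Real.sqrt (∑ i ∈ A, ‖z i‖ ^ 2))
    (G : Fin ℓ → Set (Fin n → ℂ))
    (hGopen : ∀ j, IsOpen (G j))
    (hGconv : ∀ j, Convex ℝ (G j))
    (hGcone : ∀ j, ∀ z ∈ G j, ∀ c : ℝ, 0 < c → c • z ∈ G j)
    (hGne : ∀ j, (G j).Nonempty)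
    (hG0 : ∀ j, (0 : Fin n → ℂ) ∉ G j)
    (hGdep : ∀ j, ∀ z w : Fin n → ℂ, (∀ i ∈ Ihat j, z i = w i) → (z ∈ G j ↔ w ∈ G j))
    (hGproper : ∀ j, ∀ z, z ∈ closure (G j) → -z ∈ closure (G j) → ∀ i ∈ Ihat j, z i = 0)
    (R : Fin ℓ → ℝ) (hR : ∀ j, 0 < R j)
    (W : Set (Fin n → ℂ)) (hWconv : Convex ℝ W) (hWopen : IsOpen W) (hWne : W.Nonempty)
    (hWdep : ∀ z w : Fin n → ℂ, (∀ i, (∀ j, i ∉ I j) → z i = w i) → (z ∈ W ↔ w ∈ W))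
    (U : Set (Fin n → ℂ))
    (hU : U = {z | (∀ j, nrm (Ihat j) z < R j) ∧ z ∈ W})
    (ε : ℝ) (hε : 0 < ε)
    (V : Fin ℓ → Set (Fin n → ℂ))
    (hV : ∀ j, V j = {z ∈ U | z ∈ G j ∧ ∀ β, I β ⊂ I j → nrm (Ihat β) z < ε * nrm (Ihat j) z})
    (S : Set (Fin n → ℂ)) (hS : S = ⋂ j, V j)
    (J : Finset (Fin ℓ)) (hJne : J.Nonempty)
    (SJ : Set (Fin n → ℂ))
    (hSJ : SJ = Subtype.val ''
      interior {z : {w : Fin n → ℂ // ∀ i ∈ J.biUnion I, w i = 0} | (z : Fin n → ℂ) ∈ closure S})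
    : SJ.Nonempty ∧
      SJ = {z | (∀ i ∈ J.biUnion I, z i = 0) ∧ z ∈ U ∧
        ∀ j, ¬ I j ⊆ J.biUnion I →
          z ∈ G j ∧ ∀ β, ¬ I β ⊆ J.biUnion I → I β \ J.biUnion I ⊂ I j \ J.biUnion I →
            nrm (Ihat β) z < ε * nrm (Ihat j) z} ∧
      (∀ j k, j ≠ k → ¬ I j ⊆ J.biUnion I → ¬ I k ⊆ J.biUnion I →
        (I j \ J.biUnion I ⊂ I k \ J.biUnion I ∨ I k \ J.biUnion I ⊂ I j \ J.biUnion I ∨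
          Disjoint (I j \ J.biUnion I) (I k \ J.biUnion I))) ∧
      (∀ j, ¬ I j ⊆ J.biUnion I →
        (Finset.univ.filter
            (fun k => ¬ I k ⊆ J.biUnion I ∧ I k \ J.biUnion I ⊂ I j \ J.biUnion I)).biUnion
          (fun k => I k \ J.biUnion I) ⊂ I j \ J.biUnion I) := by
  classical
  have hnr : nrm = S8.nr := by funext A z; rw [hnrm A z]; rfl
  subst hnr
  subst hU
  subst hS
  subst hSJ
  set IJ := J.biUnion I with hIJ
  obtain ⟨j₀, hj₀⟩ := hJne
  -- basic combinatorial facts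
  have hIsub : ∀ j, Ihat j ⊆ I j := fun j => by rw [hIhat]; exact Finset.sdiff_subset
  have hdisj : ∀ {j k : Fin ℓ}, j ≠ k → Disjoint (Ihat j) (Ihat k) :=
    fun h => S8.ihat_disj h1 hIhat h
  have hIJdisj : ∀ {j : Fin ℓ}, ¬ I j ⊆ IJ → Disjoint (Ihat j) IJ :=
    fun hj => S8.ihat_disj_IJ h1 hIhat hj
  have lemC : ∀ {j k : Fin ℓ}, ¬ I k ⊆ IJ → I j ⊂ I k → I j \ IJ ⊂ I k \ IJ :=
    fun hk h => S8.lemC (J := J) h1 h2 hIhat hk h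
  have lemC' : ∀ {j k : Fin ℓ}, ¬ I j ⊆ IJ → ¬ I k ⊆ IJ → I j \ IJ ⊂ I k \ IJ → I j ⊂ I k :=
    fun hj hk h => S8.lemC' (J := J) h1 h2 hIhat hj hk h
  -- δ
  set δ : ℝ := min ε 1 / 2 with hδdef
  have hmin : 0 < min ε 1 := lt_min hε one_pos
  have hδ0 : 0 < δ := by rw [hδdef]; positivity
  have hδ1 : δ < 1 := by
    have := min_le_right ε 1; rw [hδdef]; linarith
  have hδε : δ < ε := by
    have := min_le_left ε 1; rw [hδdef]; linarith
  -- generators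
  choose g hg using hGne
  have hGpos : ∀ j, ∀ z ∈ G j, 0 < S8.nr (Ihat j) z := by
    intro j z hz
    rcases (S8.nr_nonneg (A := Ihat j) (z := z)).lt_or_eq with h | h
    · exact h
    · exfalso
      refine hG0 j ?_
      refine (hGdep j z 0 ?_).1 hz
      intro i hi
      exact (S8.nr_eq_zero_iff.1 h.symm i hi).trans rfl
  have hN : ∀ j, 0 < S8.nr (Ihat j) (g j) := fun j => hGpos j (g j) (hg j)
  set c : Fin ℓ → ℝ := fun j => δ ^ (n - (I j).card) / S8.nr (Ihat j) (g j) with hcdef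
  have hck : ∀ k, c k = δ ^ (n - (I k).card) / S8.nr (Ihat k) (g k) := fun k => by rw [hcdef]
  have hc : ∀ j, 0 < c j := fun j => by rw [hck]; exact div_pos (pow_pos hδ0 _) (hN j)
  set pat : Finset (Fin ℓ) → (Fin n → ℂ) :=
    fun F => ∑ j ∈ F, (fun i => if i ∈ Ihat j then (c j : ℂ) * g j i else 0) with hpatdef
  have hpat_eq : ∀ F, ∀ j ∈ F, ∀ i ∈ Ihat j, pat F i = (c j : ℂ) * g j i := by
    intro F j hj i hi
    rw [hpatdef]
    simp only [Finset.sum_apply]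
    rw [Finset.sum_eq_single_of_mem j hj]
    · simp [hi]
    · intro k hk hkj
      have : i ∉ Ihat k := Finset.disjoint_right.1 (hdisj hkj) hi
      simp [this]
  have hpat_zero : ∀ F i, (∀ j ∈ F, i ∉ Ihat j) → pat F i = 0 := by
    intro F i h
    rw [hpatdef]
    simp only [Finset.sum_apply]
    exact Finset.sum_eq_zero fun j hj => by simp [h j hj]
  have hpat_skip : ∀ F (k : Fin ℓ), k ∉ F → ∀ i ∈ Ihat k, pat F i = 0 := by
    intro F k hk i hi
    refine hpat_zero F i fun j hj => ?_
    have hjk : k ≠ j := fun h => hk (h ▸ hj)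
    exact Finset.disjoint_left.1 (hdisj hjk) hi
  have hcoord : ∀ F (zb : Fin n → ℂ) (t : ℝ) (k : Fin ℓ), k ∈ F → (∀ i ∈ Ihat k, zb i = 0) →
      ∀ i ∈ Ihat k, (zb + t • pat F) i = ((t * c k) • g k) i := by
    intro F zb t k hk hzb i hi
    simp only [Pi.add_apply, Pi.smul_apply, Complex.real_smul]
    rw [hzb i hi, hpat_eq F k hk i hi]
    push_cast
    ring
  have hpat_nr : ∀ F (zb : Fin n → ℂ) (t : ℝ), 0 < t → ∀ k ∈ F, (∀ i ∈ Ihat k, zb i = 0) →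
      S8.nr (Ihat k) (zb + t • pat F) = t * δ ^ (n - (I k).card) := by
    intro F zb t ht k hk hzb
    rw [S8.nr_congr (hcoord F zb t k hk hzb), S8.nr_smul,
      abs_of_pos (mul_pos ht (hc k)), hck k, mul_assoc,
      div_mul_cancel₀ _ (hN k).ne']
  have hpat_G : ∀ F, ∀ k ∈ F, ∀ (zb : Fin n → ℂ) (t : ℝ), 0 < t → (∀ i ∈ Ihat k, zb i = 0) →
      zb + t • pat F ∈ G k := by
    intro F k hk zb t ht hzb
    exact (hGdep k _ ((t * c k) • g k) (hcoord F zb t k hk hzb)).2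
      (hGcone k _ (hg k) _ (mul_pos ht (hc k)))
  have hpow : ∀ {a b : Fin ℓ}, I a ⊂ I b →
      δ ^ (n - (I a).card) < ε * δ ^ (n - (I b).card) := by
    intro a b h
    have hab : (I a).card < (I b).card := Finset.card_lt_card h
    have hbn : (I b).card ≤ n := by
      have := Finset.card_le_univ (I b)
      simpa using this
    have hsplit : n - (I a).card = (n - (I b).card) + ((I b).card - (I a).card) := by omega
    rw [hsplit, pow_add]
    have h1 : δ ^ ((I b).card - (I a).card) ≤ δ := by
      have := pow_le_pow_of_le_one hδ0.le hδ1.le (show 1 ≤ (I b).card - (I a).card by omega)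
      simpa using this
    have h2 : δ ^ (n - (I b).card) * δ ^ ((I b).card - (I a).card) ≤ δ ^ (n - (I b).card) * δ :=
      mul_le_mul_of_nonneg_left h1 (pow_nonneg hδ0.le _)
    have h3 : δ ^ (n - (I b).card) * δ < δ ^ (n - (I b).card) * ε :=
      mul_lt_mul_of_pos_left hδε (pow_pos hδ0 _)
    calc δ ^ (n - (I b).card) * δ ^ ((I b).card - (I a).card)
        ≤ δ ^ (n - (I b).card) * δ := h2
      _ < δ ^ (n - (I b).card) * ε := h3
      _ = ε * δ ^ (n - (I b).card) := mul_comm _ _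
  -- closure inclusions
  have hSVmem : ∀ z : Fin n → ℂ, z ∈ (⋂ k, V k) → ∀ j, z ∈ V j := fun z hz j => Set.mem_iInter.1 hz j
  have hVmem : ∀ j (z : Fin n → ℂ), z ∈ V j →
      ((∀ k, S8.nr (Ihat k) z < R k) ∧ z ∈ W) ∧ z ∈ G j ∧
        ∀ β, I β ⊂ I j → S8.nr (Ihat β) z < ε * S8.nr (Ihat j) z := by
    intro j z hz
    rw [hV j] at hz
    exact hz
  have hclG : ∀ j, closure (⋂ k, V k) ⊆ closure (G j) :=
    fun j => closure_mono (fun z hz => (hVmem j z (hSVmem z hz j)).2.1)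
  have hclW : closure (⋂ k, V k) ⊆ closure W :=
    closure_mono (fun z hz => (hVmem j₀ z (hSVmem z hz j₀)).1.2)
  have hclR : ∀ j, ∀ z ∈ closure (⋂ k, V k), S8.nr (Ihat j) z ≤ R j := by
    intro j
    have : closure (⋂ k, V k) ⊆ {z | S8.nr (Ihat j) z ≤ R j} :=
      closure_minimal (fun z hz => ((hVmem j z (hSVmem z hz j)).1.1 j).le)
        (isClosed_le S8.continuous_nr continuous_const)
    exact fun z hz => this hz
  have hclE : ∀ j β, I β ⊂ I j → ∀ z ∈ closure (⋂ k, V k),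
      S8.nr (Ihat β) z ≤ ε * S8.nr (Ihat j) z := by
    intro j β hβj
    have : closure (⋂ k, V k) ⊆ {z | S8.nr (Ihat β) z ≤ ε * S8.nr (Ihat j) z} :=
      closure_minimal (fun z hz => ((hVmem j z (hSVmem z hz j)).2.2 β hβj).le)
        (isClosed_le S8.continuous_nr (continuous_const.mul S8.continuous_nr))
    exact fun z hz => this hz
  -- the open restricted multi-cone conditions
  set P2 : Set (Fin n → ℂ) := {z | ((∀ k, S8.nr (Ihat k) z < R k) ∧ z ∈ W) ∧
      ∀ j, ¬ I j ⊆ IJ → (z ∈ G j ∧ ∀ β, ¬ I β ⊆ IJ → I β \ IJ ⊂ I j \ IJ →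
        S8.nr (Ihat β) z < ε * S8.nr (Ihat j) z)} with hP2def
  -- eventual bounds used twice
  have hev0 : ∀ᶠ t in 𝓝[>] (0:ℝ), 0 < t := by
    filter_upwards [self_mem_nhdsWithin] with t ht
    exact ht
  have hlin : ∀ a b : ℝ, 0 < b → ∀ᶠ t in 𝓝[>] (0:ℝ), t * a < b := by
    intro a b hb
    have h : Tendsto (fun t : ℝ => t * a) (𝓝[>] 0) (𝓝 0) := by
      simpa using ((continuous_mul_right a).tendsto 0).mono_left
        (nhdsWithin_le_nhds (s := Set.Ioi (0:ℝ)))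
    exact h.eventually_lt_const hb
  have hev1 : ∀ᶠ t in 𝓝[>] (0:ℝ), ∀ k, t * δ ^ (n - (I k).card) < R k := by
    rw [Filter.eventually_all]
    intro k
    exact hlin _ _ (hR k)
  -- approximation: points satisfying P2 and vanishing on IJ are in the closure of S
  have happrox : ∀ z : Fin n → ℂ, (∀ i ∈ IJ, z i = 0) → z ∈ P2 → z ∈ closure (⋂ k, V k) := by
    intro z hz0 hzP2
    rw [hP2def] at hzP2
    obtain ⟨⟨hzR, hzW⟩, hzJ⟩ := hzP2
    set F1 : Finset (Fin ℓ) := Finset.univ.filter (fun j => I j ⊆ IJ) with hF1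
    have hF1mem : ∀ k, k ∈ F1 ↔ I k ⊆ IJ := by
      intro k; rw [hF1]; simp
    set p := pat F1 with hpdef
    have hzIhat0 : ∀ k, I k ⊆ IJ → ∀ i ∈ Ihat k, z i = 0 :=
      fun k hk i hi => hz0 i (hk (hIsub k hi))
    have hcongrB : ∀ (t : ℝ) (k : Fin ℓ), ¬ I k ⊆ IJ → ∀ i ∈ Ihat k, (z + t • p) i = z i := by
      intro t k hk i hi
      have hp0 : p i = 0 := hpat_skip F1 k (fun h => hk ((hF1mem k).1 h)) i hi
      show z i + t • p i = z i
      rw [hp0, smul_zero, add_zero]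
    have hnrA : ∀ t : ℝ, 0 < t → ∀ k, I k ⊆ IJ →
        S8.nr (Ihat k) (z + t • p) = t * δ ^ (n - (I k).card) :=
      fun t ht k hk => hpat_nr F1 z t ht k ((hF1mem k).2 hk) (hzIhat0 k hk)
    have hW' : ∀ t : ℝ, (z + t • p) ∈ W := by
      intro t
      refine (hWdep (z + t • p) z ?_).2 hzW
      intro i hi
      have hp0 : p i = 0 := hpat_zero F1 i (fun j _ => fun hmem => hi j (hIsub j hmem))
      simp [hp0]
    have hev2 : ∀ᶠ t in 𝓝[>] (0:ℝ), ∀ k j : Fin ℓ, ¬ I j ⊆ IJ →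
        t * δ ^ (n - (I k).card) < ε * S8.nr (Ihat j) z := by
      rw [Filter.eventually_all]
      intro k
      rw [Filter.eventually_all]
      intro j
      by_cases hj : I j ⊆ IJ
      · filter_upwards with t ht
        exact absurd hj ht
      · have hpos : 0 < ε * S8.nr (Ihat j) z := mul_pos hε (hGpos j z (hzJ j hj).1)
        filter_upwards [hlin (δ ^ (n - (I k).card)) _ hpos] with t ht _
        exact ht
    have htends : Tendsto (fun t : ℝ => z + t • p) (𝓝[>] 0) (𝓝 z) := by
      have hcont : Continuous (fun t : ℝ => z + t • p) :=
        continuous_const.add (continuous_id.smul continuous_const)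
      have := (hcont.tendsto 0).mono_left (nhdsWithin_le_nhds (s := Set.Ioi (0:ℝ)))
      simpa using this
    apply mem_closure_of_tendsto htends
    filter_upwards [hev0, hev1, hev2] with t ht0 hB1 hB2
    rw [Set.mem_iInter]
    intro j
    rw [hV j]
    refine ⟨⟨fun k => ?_, hW' t⟩, ?_, ?_⟩
    · by_cases hk : I k ⊆ IJ
      · rw [hnrA t ht0 k hk]; exact hB1 k
      · rw [S8.nr_congr (hcongrB t k hk)]; exact hzR k
    · by_cases hj : I j ⊆ IJ
      · exact hpat_G F1 j ((hF1mem j).2 hj) z t ht0 (hzIhat0 j hj)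
      · exact (hGdep j _ z (hcongrB t j hj)).2 (hzJ j hj).1
    · intro β hβj
      by_cases hj : I j ⊆ IJ
      · have hβ : I β ⊆ IJ := hβj.subset.trans hj
        rw [hnrA t ht0 β hβ, hnrA t ht0 j hj]
        calc t * δ ^ (n - (I β).card) < t * (ε * δ ^ (n - (I j).card)) :=
              mul_lt_mul_of_pos_left (hpow hβj) ht0
          _ = ε * (t * δ ^ (n - (I j).card)) := by ring
      · have hnrj : S8.nr (Ihat j) (z + t • p) = S8.nr (Ihat j) z :=
          S8.nr_congr (hcongrB t j hj)
        by_cases hβ : I β ⊆ IJ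
        · rw [hnrA t ht0 β hβ, hnrj]
          exact hB2 β j hj
        · rw [S8.nr_congr (hcongrB t β hβ), hnrj]
          exact (hzJ j hj).2 β hβ (lemC hj hβj)
  -- openness of P2
  have hP2open : IsOpen P2 := by
    have hrw : P2 = ((⋂ k, {z : Fin n → ℂ | S8.nr (Ihat k) z < R k}) ∩ W) ∩
        ⋂ j ∈ Finset.univ.filter (fun j : Fin ℓ => ¬ I j ⊆ IJ),
          (G j ∩ ⋂ β ∈ Finset.univ.filter
              (fun β : Fin ℓ => ¬ I β ⊆ IJ ∧ I β \ IJ ⊂ I j \ IJ),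
            {z : Fin n → ℂ | S8.nr (Ihat β) z < ε * S8.nr (Ihat j) z}) := by
      ext z
      simp only [hP2def, Set.mem_setOf_eq, Set.mem_inter_iff, Set.mem_iInter,
        Finset.mem_filter, Finset.mem_univ, true_and]
      constructor
      · rintro ⟨⟨hA, hB⟩, hC⟩
        exact ⟨⟨fun k => hA k, hB⟩, fun j hj => ⟨(hC j hj).1, fun β hβ => (hC j hj).2 β hβ.1 hβ.2⟩⟩
      · rintro ⟨⟨hA, hB⟩, hC⟩
        exact ⟨⟨fun k => hA k, hB⟩, fun j hj => ⟨(hC j hj).1, fun β hβ1 hβ2 => (hC j hj).2 β ⟨hβ1, hβ2⟩⟩⟩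
    rw [hrw]
    refine (IsOpen.inter (isOpen_iInter_of_finite fun k =>
        isOpen_lt S8.continuous_nr continuous_const) hWopen).inter
      (isOpen_biInter_finset fun j _ => (hGopen j).inter
        (isOpen_biInter_finset fun β _ =>
          isOpen_lt S8.continuous_nr (continuous_const.mul S8.continuous_nr)))
  -- The main set equality
  have hmain : Subtype.val '' interior {z : {w : Fin n → ℂ // ∀ i ∈ IJ, w i = 0} |
        (z : Fin n → ℂ) ∈ closure (⋂ k, V k)} =
      {z : Fin n → ℂ | (∀ i ∈ IJ, z i = 0) ∧ z ∈ P2} := by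
    apply Set.Subset.antisymm
    · -- SJ ⊆ T
      rintro _ ⟨x, hx, rfl⟩
      rw [mem_interior_iff_mem_nhds, Metric.mem_nhds_iff] at hx
      obtain ⟨δ₀, hδ₀, hball⟩ := hx
      have hper : ∀ v : Fin n → ℂ, (∀ i ∈ IJ, v i = 0) → dist v x.val < δ₀ →
          v ∈ closure (⋂ k, V k) := by
        intro v hv hd
        have hmem : (⟨v, hv⟩ : {w : Fin n → ℂ // ∀ i ∈ IJ, w i = 0}) ∈ Metric.ball x δ₀ := by
          rw [Metric.mem_ball, Subtype.dist_eq]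
          exact hd
        exact hball hmem
      have hz0 : ∀ i ∈ IJ, x.val i = 0 := x.2
      have hzcl : x.val ∈ closure (⋂ k, V k) := hper _ hz0 (by simpa using hδ₀)
      have hmemG : ∀ j, ¬ I j ⊆ IJ → x.val ∈ G j := by
        intro j hj
        refine S8.mem_of_cyl (A := (↑(Ihat j) : Set (Fin n))) hδ₀ (hGopen j) (hGconv j)
          ⟨g j, hg j⟩ (fun a b hab => hGdep j a b (fun i hi => hab i (Finset.mem_coe.2 hi))) ?_
        intro v hv hd
        refine hclG j (hper v ?_ hd)
        intro i hi
        have hiA : i ∉ (↑(Ihat j) : Set (Fin n)) :=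
          fun hmem => Finset.disjoint_left.1 (hIJdisj hj) (Finset.mem_coe.1 hmem) hi
        rw [hv i hiA, hz0 i hi]
      have hmemW : x.val ∈ W := by
        refine S8.mem_of_cyl (A := {i : Fin n | ∀ j, i ∉ I j}) hδ₀ hWopen hWconv hWne
          (fun a b hab => hWdep a b (fun i hi => hab i hi)) ?_
        intro v hv hd
        refine hclW (hper v ?_ hd)
        intro i hi
        have hiA : i ∉ {i : Fin n | ∀ j, i ∉ I j} := by
          obtain ⟨k, _, hik⟩ := Finset.mem_biUnion.1 hi
          exact fun h => h k hik
        rw [hv i hiA, hz0 i hi]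
      -- scaling perturbations
      have hscale : ∀ B : Finset (Fin n), Disjoint B IJ → ∃ s : ℝ, 0 < s ∧
          (fun i => if i ∈ B then ((1 + s : ℝ) : ℂ) * x.val i else x.val i) ∈
            closure (⋂ k, V k) := by
        intro B hB
        have htend : Tendsto
            (fun s : ℝ => (fun i => if i ∈ B then ((1 + s : ℝ) : ℂ) * x.val i else x.val i))
            (𝓝[>] 0) (𝓝 x.val) := by
          rw [tendsto_pi_nhds]
          intro i
          by_cases hi : i ∈ B
          · simp only [hi, if_pos]
            have hcont : Continuous (fun s : ℝ => ((1 + s : ℝ) : ℂ) * x.val i) :=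
              (Complex.continuous_ofReal.comp (continuous_const.add continuous_id)).mul
                continuous_const
            have := (hcont.tendsto 0).mono_left (nhdsWithin_le_nhds (s := Set.Ioi (0:ℝ)))
            simpa using this
          · simp only [hi, if_neg, not_false_iff]
            exact tendsto_const_nhds
        have hev : ∀ᶠ s in 𝓝[>] (0:ℝ),
            (fun i => if i ∈ B then ((1 + s : ℝ) : ℂ) * x.val i else x.val i) ∈
              Metric.ball x.val δ₀ := htend (Metric.ball_mem_nhds _ hδ₀)
        obtain ⟨s, hs1, hs2⟩ := (hev0.and hev).exists
        refine ⟨s, hs1, hper _ ?_ (Metric.mem_ball.1 hs2)⟩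
        intro i hi
        have hiB : i ∉ B := Finset.disjoint_right.1 hB hi
        simp [hiB, hz0 i hi]
      have hUR : ∀ j, S8.nr (Ihat j) x.val < R j := by
        intro j
        by_cases hj : I j ⊆ IJ
        · have h0 : S8.nr (Ihat j) x.val = 0 :=
            S8.nr_eq_zero_iff.2 (fun i hi => hz0 i (hj (hIsub j hi)))
          rw [h0]; exact hR j
        · rcases (hclR j _ hzcl).lt_or_eq with h | h
          · exact h
          exfalso
          obtain ⟨s, hs, hmem⟩ := hscale (Ihat j) (hIJdisj hj)
          have hle := hclR j _ hmem
          have hcg : S8.nr (Ihat j)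
              (fun i => if i ∈ Ihat j then ((1 + s : ℝ) : ℂ) * x.val i else x.val i) =
              (1 + s) * S8.nr (Ihat j) x.val := by
            rw [S8.nr_congr (w := (1 + s) • x.val) (fun i hi => by
              simp [hi, Complex.real_smul]), S8.nr_smul, abs_of_pos (by linarith : (0:ℝ) < 1 + s)]
          rw [hcg, h] at hle
          nlinarith [hR j]
      have hεstrict : ∀ j β, ¬ I j ⊆ IJ → ¬ I β ⊆ IJ → I β \ IJ ⊂ I j \ IJ →
          S8.nr (Ihat β) x.val < ε * S8.nr (Ihat j) x.val := by
        intro j β hj hβ hss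
        have hβj : I β ⊂ I j := lemC' hβ hj hss
        rcases (hclE j β hβj _ hzcl).lt_or_eq with h | h
        · exact h
        exfalso
        have hjpos : 0 < S8.nr (Ihat j) x.val := hGpos j _ (hmemG j hj)
        obtain ⟨s, hs, hmem⟩ := hscale (Ihat β) (hIJdisj hβ)
        have hle := hclE j β hβj _ hmem
        have hβne : β ≠ j := fun h' => (ssubset_irrefl _) (h' ▸ hβj)
        have e1 : S8.nr (Ihat β)
            (fun i => if i ∈ Ihat β then ((1 + s : ℝ) : ℂ) * x.val i else x.val i) =
            (1 + s) * S8.nr (Ihat β) x.val := by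
          rw [S8.nr_congr (w := (1 + s) • x.val) (fun i hi => by
            simp [hi, Complex.real_smul]), S8.nr_smul, abs_of_pos (by linarith : (0:ℝ) < 1 + s)]
        have e2 : S8.nr (Ihat j)
            (fun i => if i ∈ Ihat β then ((1 + s : ℝ) : ℂ) * x.val i else x.val i) =
            S8.nr (Ihat j) x.val := by
          refine S8.nr_congr (fun i hi => ?_)
          have : i ∉ Ihat β := Finset.disjoint_right.1 (hdisj hβne) hi
          simp [this]
        rw [e1, e2, h] at hle
        nlinarith [mul_pos hs (mul_pos hε hjpos)]
      exact ⟨hz0, ⟨hUR, hmemW⟩, fun j hj => ⟨hmemG j hj, fun β hβ hss => hεstrict j β hj hβ hss⟩⟩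
    · -- T ⊆ SJ
      rintro z ⟨hz0, hzP2⟩
      refine ⟨⟨z, hz0⟩, ?_, rfl⟩
      have hO : IsOpen {y : {w : Fin n → ℂ // ∀ i ∈ IJ, w i = 0} | y.val ∈ P2} :=
        hP2open.preimage continuous_subtype_val
      have hsub : {y : {w : Fin n → ℂ // ∀ i ∈ IJ, w i = 0} | y.val ∈ P2} ⊆
          {y : {w : Fin n → ℂ // ∀ i ∈ IJ, w i = 0} | (y : Fin n → ℂ) ∈ closure (⋂ k, V k)} :=
        fun y hy => happrox y.val y.2 hy
      exact interior_maximal hsub hO hzP2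
  -- nonemptiness of the target
  have hne : ∃ z : Fin n → ℂ, (∀ i ∈ IJ, z i = 0) ∧ z ∈ P2 := by
    obtain ⟨w₀, hw₀⟩ := hWne
    set b : Fin n → ℂ := fun i => if ∀ j, i ∉ I j then w₀ i else 0 with hbdef
    have hbeq : ∀ i, (∀ j, i ∉ I j) → b i = w₀ i := by
      intro i hi; rw [hbdef]; simp only [if_pos hi]
    have hb0 : ∀ i, (∃ j, i ∈ I j) → b i = 0 := by
      intro i ⟨j, hj⟩
      rw [hbdef]
      simp only [ite_eq_right_iff]
      intro h
      exact absurd hj (h j)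
    have hbW : b ∈ W := (hWdep b w₀ (fun i hi => hbeq i hi)).2 hw₀
    set F2 : Finset (Fin ℓ) := Finset.univ.filter (fun j => ¬ I j ⊆ IJ) with hF2
    have hF2mem : ∀ k, k ∈ F2 ↔ ¬ I k ⊆ IJ := by
      intro k; rw [hF2]; simp
    set q := pat F2 with hqdef
    have hbIhat0 : ∀ k, ∀ i ∈ Ihat k, b i = 0 := fun k i hi => hb0 i ⟨k, hIsub k hi⟩
    obtain ⟨t, ht0, ht1⟩ := (hev0.and hev1).exists
    have hnrA2 : ∀ k, ¬ I k ⊆ IJ → S8.nr (Ihat k) (b + t • q) = t * δ ^ (n - (I k).card) :=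
      fun k hk => hpat_nr F2 b t ht0 k ((hF2mem k).2 hk) (hbIhat0 k)
    have hq0 : ∀ k, I k ⊆ IJ → ∀ i ∈ Ihat k, q i = 0 :=
      fun k hk => hpat_skip F2 k (fun h => ((hF2mem k).1 h) hk)
    refine ⟨b + t • q, ?_, ?_⟩
    · intro i hi
      obtain ⟨k, _, hik⟩ := Finset.mem_biUnion.1 hi
      have hbz : b i = 0 := hb0 i ⟨k, hik⟩
      have hqz : q i = 0 := by
        refine hpat_zero F2 i fun j hj => fun hmem => ?_
        exact Finset.disjoint_left.1 (hIJdisj ((hF2mem j).1 hj)) hmem hi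
      simp [hbz, hqz]
    · rw [hP2def]
      refine ⟨⟨fun k => ?_, ?_⟩, ?_⟩
      · by_cases hk : I k ⊆ IJ
        · have h0 : S8.nr (Ihat k) (b + t • q) = 0 := by
            refine S8.nr_eq_zero_iff.2 fun i hi => ?_
            simp [hbIhat0 k i hi, hq0 k hk i hi]
          rw [h0]; exact hR k
        · rw [hnrA2 k hk]; exact ht1 k
      · refine (hWdep (b + t • q) b ?_).2 hbW
        intro i hi
        have hqz : q i = 0 := hpat_zero F2 i fun j _ => fun hmem => hi j (hIsub j hmem)
        simp [hqz]
      · intro j hj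
        refine ⟨hpat_G F2 j ((hF2mem j).2 hj) b t ht0 (hbIhat0 j), ?_⟩
        intro β hβ hss
        have hβj : I β ⊂ I j := lemC' hβ hj hss
        rw [hnrA2 β hβ, hnrA2 j hj]
        calc t * δ ^ (n - (I β).card) < t * (ε * δ ^ (n - (I j).card)) :=
              mul_lt_mul_of_pos_left (hpow hβj) ht0
          _ = ε * (t * δ ^ (n - (I j).card)) := by ring
  -- assemble
  obtain ⟨z₀, hz₀⟩ := hne
  refine ⟨?_, ?_, ?_, ?_⟩
  · rw [hmain]
    exact ⟨z₀, hz₀⟩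
  · rw [hmain]
    rfl
  · intro j k hjk hj hk
    rcases h1 j k hjk with h | h | h
    · exact Or.inl (lemC hk h)
    · exact Or.inr (Or.inl (lemC hj h))
    · exact Or.inr (Or.inr (h.mono Finset.sdiff_subset Finset.sdiff_subset))
  · intro j hj
    rw [Finset.ssubset_iff_of_subset (Finset.biUnion_subset.2 fun k hk =>
      (Finset.mem_filter.1 hk).2.2.subset)]
    obtain ⟨i, hi⟩ := S8.ihat_nonempty h2 hIhat j
    refine ⟨i, Finset.mem_sdiff.2 ⟨hIsub j hi, Finset.disjoint_left.1 (hIJdisj hj) hi⟩, ?_⟩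
    intro hmem
    obtain ⟨k, hk, hik⟩ := Finset.mem_biUnion.1 hmem
    have hkmem := Finset.mem_filter.1 hk
    have hkj : I k ⊂ I j := lemC' hkmem.2.1 hj hkmem.2.2
    exact Finset.disjoint_left.1 (S8.subset_vanish hIhat hkj) (Finset.mem_sdiff.1 hik).1 hi
end

section
/- Let $S=S(U,\{G_j\},\epsilon)$ be a proper multi-cone and $J\in\hat{\mathcal{P}}(\mathbb{Z}_\ell)$. Then $\overline{S_J}=\overline S\cap Z_J$, and for any nonempty $J'\subseteq\{1,\dots,\ell\}$ with $Z_J\not\subseteq Z_{J'}$ one has $Z_{J'}\cap S_J=\emptyset$. -/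
open Filter Topology

/-- Lemma 7.1, 2.: `closure S_J = closure S ∩ Z_J`, and for any nonempty
`J′` with `Z_J ⊄ Z_{J′}` one has `Z_{J′} ∩ S_J = ∅`. -/
theorem stmt_9
    (n ℓ : ℕ) (I : Fin ℓ → Finset (Fin n))
    (h1 : ∀ j k, j ≠ k → I j ⊂ I k ∨ I k ⊂ I j ∨ Disjoint (I j) (I k))
    (h2 : ∀ j, (Finset.univ.filter (fun k => I k ⊂ I j)).biUnion I ⊂ I j)
    (Ihat : Fin ℓ → Finset (Fin n))
    (hIhat : ∀ j, Ihat j = I j \ (Finset.univ.filter (fun k => I k ⊂ I j)).biUnion I)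
    (nrm : Finset (Fin n) → (Fin n → ℂ) → ℝ)
    (hnrm : ∀ A z, nrm A z = Real.sqrt (∑ i ∈ A, ‖z i‖ ^ 2))
    (G : Fin ℓ → Set (Fin n → ℂ))
    (hGopen : ∀ j, IsOpen (G j))
    (hGconv : ∀ j, Convex ℝ (G j))
    (hGcone : ∀ j, ∀ z ∈ G j, ∀ c : ℝ, 0 < c → c • z ∈ G j)
    (hGne : ∀ j, (G j).Nonempty)
    (hG0 : ∀ j, (0 : Fin n → ℂ) ∉ G j)
    (hGdep : ∀ j, ∀ z w : Fin n → ℂ, (∀ i ∈ Ihat j, z i = w i) → (z ∈ G j ↔ w ∈ G j))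
    (hGproper : ∀ j, ∀ z, z ∈ closure (G j) → -z ∈ closure (G j) → ∀ i ∈ Ihat j, z i = 0)
    (R : Fin ℓ → ℝ) (hR : ∀ j, 0 < R j)
    (W : Set (Fin n → ℂ)) (hWconv : Convex ℝ W) (hWopen : IsOpen W) (hWne : W.Nonempty)
    (hWdep : ∀ z w : Fin n → ℂ, (∀ i, (∀ j, i ∉ I j) → z i = w i) → (z ∈ W ↔ w ∈ W))
    (U : Set (Fin n → ℂ))
    (hU : U = {z | (∀ j, nrm (Ihat j) z < R j) ∧ z ∈ W})
    (ε : ℝ) (hε : 0 < ε)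
    (V : Fin ℓ → Set (Fin n → ℂ))
    (hV : ∀ j, V j = {z ∈ U | z ∈ G j ∧ ∀ β, I β ⊂ I j → nrm (Ihat β) z < ε * nrm (Ihat j) z})
    (S : Set (Fin n → ℂ)) (hS : S = ⋂ j, V j)
    (J : Finset (Fin ℓ)) (hJne : J.Nonempty)
    (SJ : Set (Fin n → ℂ))
    (hSJ : SJ = Subtype.val ''
      interior {z : {w : Fin n → ℂ // ∀ i ∈ J.biUnion I, w i = 0} | (z : Fin n → ℂ) ∈ closure S})
    : closure SJ = closure S ∩ {z | ∀ i ∈ J.biUnion I, z i = 0} ∧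
      ∀ J' : Finset (Fin ℓ), J'.Nonempty →
        ¬ ({z : Fin n → ℂ | ∀ i ∈ J.biUnion I, z i = 0} ⊆
            {z : Fin n → ℂ | ∀ i ∈ J'.biUnion I, z i = 0}) →
        {z : Fin n → ℂ | ∀ i ∈ J'.biUnion I, z i = 0} ∩ SJ = ∅ := by
  classical
  obtain ⟨jJ, hjJ⟩ := hJne
  set A : Finset (Fin n) := J.biUnion I with hA
  -- basic facts about nrm
  have hnn : ∀ (B : Finset (Fin n)) z, 0 ≤ nrm B z := by
    intro B z; rw [hnrm]; exact Real.sqrt_nonneg _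
  have hncongr : ∀ (B : Finset (Fin n)) z w, (∀ i ∈ B, z i = w i) → nrm B z = nrm B w := by
    intro B z w h; rw [hnrm, hnrm]; congr 1
    exact Finset.sum_congr rfl fun i hi => by rw [h i hi]
  have hnscale : ∀ (B : Finset (Fin n)) (t : ℝ) z w, 0 ≤ t →
      (∀ i ∈ B, z i = (t : ℂ) * w i) → nrm B z = t * nrm B w := by
    intro B t z w ht h
    rw [hnrm, hnrm]
    have heq : ∑ i ∈ B, ‖z i‖ ^ 2 = t ^ 2 * ∑ i ∈ B, ‖w i‖ ^ 2 := by
      rw [Finset.mul_sum]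
      refine Finset.sum_congr rfl fun i hi => ?_
      rw [h i hi, norm_mul, Complex.norm_real, Real.norm_of_nonneg ht]; ring
    rw [heq, Real.sqrt_mul (sq_nonneg t), Real.sqrt_sq ht]
  have hncont : ∀ B : Finset (Fin n), Continuous (nrm B) := by
    intro B
    have h : nrm B = fun z => Real.sqrt (∑ i ∈ B, ‖z i‖ ^ 2) := funext (hnrm B)
    rw [h]
    exact Real.continuous_sqrt.comp <| continuous_finset_sum B fun i _ =>
      (continuous_norm.comp (continuous_apply i)).pow 2
  have hGpos : ∀ j z, z ∈ G j → 0 < nrm (Ihat j) z := by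
    intro j z hz
    rcases (hnn (Ihat j) z).lt_or_eq with h | h
    · exact h
    exfalso
    have hsum : ∑ i ∈ Ihat j, ‖z i‖ ^ 2 = 0 := by
      have h0 : Real.sqrt (∑ i ∈ Ihat j, ‖z i‖ ^ 2) = 0 := by
        rw [← hnrm, ← h]
      have h2 : ∑ i ∈ Ihat j, ‖z i‖ ^ 2 ≤ 0 := Real.sqrt_eq_zero'.mp h0
      exact le_antisymm h2 (Finset.sum_nonneg fun i _ => sq_nonneg _)
    have hz0 : ∀ i ∈ Ihat j, z i = 0 := by
      intro i hi
      have h3 := (Finset.sum_eq_zero_iff_of_nonneg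
        (fun i _ => sq_nonneg ‖z i‖)).mp hsum i hi
      have h4 : ‖z i‖ = 0 := by nlinarith [norm_nonneg (z i)]
      exact norm_eq_zero.mp h4
    exact hG0 j ((hGdep j z 0 (fun i hi => by simp [hz0 i hi])).mp hz)
  -- unfold S membership
  have hmemS : ∀ z, z ∈ S ↔ ∀ j, (∀ k, nrm (Ihat k) z < R k) ∧ z ∈ W ∧ z ∈ G j ∧
      ∀ β, I β ⊂ I j → nrm (Ihat β) z < ε * nrm (Ihat j) z := by
    intro z
    rw [hS, Set.mem_iInter]
    refine forall_congr' fun j => ?_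
    rw [hV j, Set.mem_sep_iff, hU]
    simp only [Set.mem_setOf_eq]
    tauto
  -- S is contained in each G j
  have hSG : ∀ j, S ⊆ G j := fun j z hz => ((hmemS z).mp hz j).2.2.1
  -- dominated indices
  set Dom : Fin ℓ → Prop := fun j => ∃ j0 ∈ J, I j ⊆ I j0 with hDom
  have hDomA : ∀ j, Dom j → Ihat j ⊆ A := by
    rintro j ⟨j0, hj0, hsub⟩
    rw [hIhat]
    exact (Finset.sdiff_subset.trans hsub).trans (Finset.subset_biUnion_of_mem I hj0)
  have hNotDomA : ∀ j, ¬ Dom j → ∀ i ∈ Ihat j, i ∉ A := by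
    intro j hnd i hi hiA
    rw [hA, Finset.mem_biUnion] at hiA
    obtain ⟨j0, hj0, hiI⟩ := hiA
    have hne : j ≠ j0 := by rintro rfl; exact hnd ⟨_, hj0, subset_rfl⟩
    have hiIj : i ∈ I j := (Finset.mem_sdiff.mp (hIhat j ▸ hi)).1
    rcases h1 j j0 hne with h | h | h
    · exact hnd ⟨j0, hj0, h.subset⟩
    · rw [hIhat, Finset.mem_sdiff] at hi
      exact hi.2 (Finset.mem_biUnion.mpr ⟨j0, Finset.mem_filter.mpr ⟨Finset.mem_univ _, h⟩, hiI⟩)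
    · exact (Finset.disjoint_left.mp h) hiIj hiI
  -- the key step: the projection of any point of S to Z_J lies in S_J
  have hkey : ∀ w ∈ S, (fun i => if i ∈ A then (0:ℂ) else w i) ∈ SJ := by
    intro w hw
    set pw : Fin n → ℂ := fun i => if i ∈ A then (0:ℂ) else w i with hpw
    have hwfacts := (hmemS w).mp hw
    -- the open neighborhood O
    set O : Set (Fin n → ℂ) := W ∩ ⋂ j, ⋂ (_ : ¬ Dom j),
        ((G j ∩ {u | nrm (Ihat j) u < R j}) ∩ ⋂ β, ⋂ (_ : I β ⊂ I j ∧ ¬ Dom β),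
          {u | nrm (Ihat β) u < ε * nrm (Ihat j) u}) with hO
    have hOopen : IsOpen O := by
      refine hWopen.inter (isOpen_iInter_of_finite fun j => isOpen_iInter_of_finite fun _ => ?_)
      refine (((hGopen j).inter ((hncont (Ihat j)).isOpen_preimage _ isOpen_Iio)).inter ?_)
      exact isOpen_iInter_of_finite fun β => isOpen_iInter_of_finite fun _ =>
        isOpen_lt (hncont (Ihat β)) (continuous_const.mul (hncont (Ihat j)))
    -- pw ∈ O
    have hpwW : pw ∈ W := by
      refine (hWdep pw w ?_).mpr (hwfacts jJ).2.1
      intro i hi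
      have : i ∉ A := by
        rw [hA, Finset.mem_biUnion]; rintro ⟨j0, _, hiI⟩; exact hi j0 hiI
      simp [hpw, this]
    have hpwcongr : ∀ j, ¬ Dom j → ∀ i ∈ Ihat j, pw i = w i := by
      intro j hnd i hi
      simp [hpw, hNotDomA j hnd i hi]
    have hpwO : pw ∈ O := by
      rw [hO]
      refine ⟨hpwW, Set.mem_iInter.mpr fun j => Set.mem_iInter.mpr fun hnd => ?_⟩
      have hfj := hwfacts j
      refine ⟨⟨(hGdep j pw w (hpwcongr j hnd)).mpr hfj.2.2.1, ?_⟩, ?_⟩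
      · show nrm (Ihat j) pw < R j
        rw [hncongr _ pw w (hpwcongr j hnd)]; exact hfj.1 j
      · refine Set.mem_iInter.mpr fun β => Set.mem_iInter.mpr fun hβ => ?_
        show nrm (Ihat β) pw < ε * nrm (Ihat j) pw
        rw [hncongr _ pw w (hpwcongr β hβ.2), hncongr _ pw w (hpwcongr j hnd)]
        exact hfj.2.2.2 β hβ.1
    -- membership facts extracted from O
    have hOspec : ∀ u ∈ O, u ∈ W ∧ ∀ j, ¬ Dom j → (u ∈ G j ∧ nrm (Ihat j) u < R j ∧
        ∀ β, I β ⊂ I j → ¬ Dom β → nrm (Ihat β) u < ε * nrm (Ihat j) u) := by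
      intro u hu
      rw [hO] at hu
      refine ⟨hu.1, fun j hnd => ?_⟩
      have h3 := Set.mem_iInter.mp (Set.mem_iInter.mp hu.2 j) hnd
      refine ⟨h3.1.1, h3.1.2, fun β hβ hndβ => ?_⟩
      exact Set.mem_iInter.mp (Set.mem_iInter.mp h3.2 β) ⟨hβ, hndβ⟩
    -- every point of O ∩ Z_J is in the closure of S
    have hOcl : ∀ u ∈ O, (∀ i ∈ A, u i = 0) → u ∈ closure S := by
      intro u hu huZ
      obtain ⟨huW, huj⟩ := hOspec u hu
      set m : ℝ → (Fin n → ℂ) := fun t i => if i ∈ A then (t:ℂ) * w i else u i with hm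
      have htend : Tendsto m (𝓝[>] (0:ℝ)) (𝓝 u) := by
        rw [tendsto_pi_nhds]
        intro i
        by_cases hi : i ∈ A
        · have h0 : Tendsto (fun t : ℝ => (t:ℂ) * w i) (𝓝[>] (0:ℝ)) (𝓝 (((0:ℝ):ℂ) * w i)) :=
            ((Complex.continuous_ofReal.tendsto 0).mono_left nhdsWithin_le_nhds).mul
              tendsto_const_nhds
          simp only [hm]
          simp only [hi, if_true]
          rw [huZ i hi]
          simpa using h0
        · simp only [hm, hi, if_false]
          exact tendsto_const_nhds
      have hev : ∀ᶠ t in 𝓝[>] (0:ℝ), m t ∈ S := by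
        have hev1 : ∀ᶠ t in 𝓝[>] (0:ℝ), 0 < t := eventually_mem_nhdsWithin
        have hev2 : ∀ᶠ t in 𝓝[>] (0:ℝ), t < 1 :=
          eventually_nhdsWithin_of_eventually_nhds (by
            filter_upwards [Iio_mem_nhds (show (0:ℝ) < 1 by norm_num)] with t ht using ht)
        have hev3 : ∀ᶠ t in 𝓝[>] (0:ℝ), ∀ j β, (¬ Dom j ∧ I β ⊂ I j) →
            t * nrm (Ihat β) w < ε * nrm (Ihat j) u := by
          rw [eventually_all]
          intro j
          rw [eventually_all]
          intro β
          by_cases hc : ¬ Dom j ∧ I β ⊂ I j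
          · have hpos : 0 < ε * nrm (Ihat j) u :=
              mul_pos hε (hGpos j u (huj j hc.1).1)
            have htd : Tendsto (fun t : ℝ => t * nrm (Ihat β) w) (𝓝[>] (0:ℝ)) (𝓝 0) := by
              have := (tendsto_id.mul_const (nrm (Ihat β) w)).mono_left
                (nhdsWithin_le_nhds : 𝓝[>] (0:ℝ) ≤ 𝓝 0)
              simpa using this
            filter_upwards [htd (Iio_mem_nhds hpos)] with t ht
            intro _; exact ht
          · exact Eventually.of_forall fun t hcc => absurd hcc hc
        filter_upwards [hev1, hev2, hev3] with t ht0 ht1 htc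
        -- prove m t ∈ S
        have hmdom : ∀ j, Dom j → nrm (Ihat j) (m t) = t * nrm (Ihat j) w := by
          intro j hd
          refine hnscale _ t _ w ht0.le fun i hi => ?_
          simp [hm, hDomA j hd hi]
        have hmnot : ∀ j, ¬ Dom j → nrm (Ihat j) (m t) = nrm (Ihat j) u := by
          intro j hnd
          refine hncongr _ _ u fun i hi => ?_
          simp [hm, hNotDomA j hnd i hi]
        rw [hmemS]
        intro j
        have hUpart : ∀ k, nrm (Ihat k) (m t) < R k := by
          intro k
          by_cases hd : Dom k
          · rw [hmdom k hd]
            calc t * nrm (Ihat k) w ≤ 1 * nrm (Ihat k) w := by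
                  exact mul_le_mul_of_nonneg_right ht1.le (hnn _ _)
              _ = nrm (Ihat k) w := one_mul _
              _ < R k := (hwfacts k).1 k
          · rw [hmnot k hd]
            exact (huj k hd).2.1
        have hWpart : m t ∈ W := by
          refine (hWdep (m t) u ?_).mpr huW
          intro i hi
          have hiA : i ∉ A := by
            rw [hA, Finset.mem_biUnion]; rintro ⟨j0, _, hiI⟩; exact hi j0 hiI
          simp [hm, hiA]
        refine ⟨hUpart, hWpart, ?_, ?_⟩
        · by_cases hd : Dom j
          · refine (hGdep j (m t) (t • w) ?_).mpr (hGcone j w (hwfacts j).2.2.1 t ht0)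
            intro i hi
            simp [hm, hDomA j hd hi, Pi.smul_apply, Complex.real_smul]
          · refine (hGdep j (m t) u ?_).mpr (huj j hd).1
            intro i hi
            simp [hm, hNotDomA j hd i hi]
        · intro β hβ
          by_cases hd : Dom j
          · have hdβ : Dom β := by
              obtain ⟨j0, hj0, hsub⟩ := hd
              exact ⟨j0, hj0, hβ.subset.trans hsub⟩
            rw [hmdom β hdβ, hmdom j hd]
            have hww := (hwfacts j).2.2.2 β hβ
            calc t * nrm (Ihat β) w < t * (ε * nrm (Ihat j) w) :=
                  (mul_lt_mul_iff_right₀ ht0).mpr hww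
              _ = ε * (t * nrm (Ihat j) w) := by ring
          · rw [hmnot j hd]
            by_cases hdβ : Dom β
            · rw [hmdom β hdβ]
              exact htc j β ⟨hd, hβ⟩
            · rw [hmnot β hdβ]
              exact (huj j hd).2.2 β hβ hdβ
      exact mem_closure_of_tendsto htend hev
    -- conclude pw ∈ SJ
    have hpwZ : ∀ i ∈ J.biUnion I, pw i = 0 := fun i hi => by simp [hpw, hA ▸ hi]
    rw [hSJ]
    refine ⟨⟨pw, hpwZ⟩, ?_, rfl⟩
    rw [mem_interior]
    refine ⟨Subtype.val ⁻¹' O, ?_, hOopen.preimage continuous_subtype_val, hpwO⟩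
    rintro ⟨y, hy⟩ hyO
    exact hOcl y hyO hy
  -- closedness of Z_J
  have hZclosed : IsClosed {z : Fin n → ℂ | ∀ i ∈ J.biUnion I, z i = 0} := by
    rw [Set.setOf_forall]
    refine isClosed_iInter fun i => ?_
    by_cases hi : i ∈ J.biUnion I
    · have heq : {z : Fin n → ℂ | i ∈ J.biUnion I → z i = 0} = {z | z i = 0} := by
        ext z; simp [hi]
      rw [heq]; exact isClosed_eq (continuous_apply i) continuous_const
    · have heq : {z : Fin n → ℂ | i ∈ J.biUnion I → z i = 0} = Set.univ := by
        ext z; simp [hi]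
      rw [heq]; exact isClosed_univ
  have hSJsub : SJ ⊆ closure S ∩ {z | ∀ i ∈ J.biUnion I, z i = 0} := by
    rw [hSJ]
    rintro x ⟨y, hy, rfl⟩
    have h' := interior_subset hy
    exact ⟨h', y.2⟩
  constructor
  · apply subset_antisymm
    · exact closure_minimal hSJsub (isClosed_closure.inter hZclosed)
    · rintro z ⟨hzS, hzZ⟩
      rw [Metric.mem_closure_iff]
      intro ε' hε'
      obtain ⟨w, hwS, hwd⟩ := Metric.mem_closure_iff.mp hzS ε' hε'
      refine ⟨_, hkey w hwS, ?_⟩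
      have hle : dist (fun i => if i ∈ A then (0:ℂ) else w i) z ≤ dist w z := by
        rw [dist_pi_le_iff dist_nonneg]
        intro i
        by_cases hi : i ∈ A
        · simp only [hi, if_true]
          rw [hzZ i (hA ▸ hi)]
          simp [dist_nonneg]
        · simp only [hi, if_false]
          exact dist_le_pi_dist w z i
      calc dist z (fun i => if i ∈ A then (0:ℂ) else w i)
          = dist (fun i => if i ∈ A then (0:ℂ) else w i) z := dist_comm _ _
        _ ≤ dist w z := hle
        _ = dist z w := dist_comm _ _
        _ < ε' := hwd
  · -- part 2
    intro J' hJ'ne hnsub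
    rw [Set.eq_empty_iff_forall_notMem]
    rintro z ⟨hzJ', hzSJ⟩
    -- find i0 ∈ J'.biUnion I with i0 ∉ A
    have hex : ∃ i0 ∈ J'.biUnion I, i0 ∉ A := by
      by_contra hcon
      push_neg at hcon
      exact hnsub fun x hx i hi => hx i (by
        rcases Finset.mem_biUnion.mp hi with ⟨j0, hj0, hij0⟩
        exact hA ▸ hcon i hi)
    obtain ⟨i0, hi0J', hi0A⟩ := hex
    obtain ⟨j', hj'J', hi0j'⟩ := Finset.mem_biUnion.mp hi0J'
    -- minimal index containing i0
    set T : Finset (Fin ℓ) := Finset.univ.filter (fun k => i0 ∈ I k) with hT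
    have hj'T : j' ∈ T := Finset.mem_filter.mpr ⟨Finset.mem_univ _, hi0j'⟩
    obtain ⟨js, hjsT, hjsmin⟩ := Finset.exists_min_image T (fun k => (I k).card) ⟨j', hj'T⟩
    have hi0js : i0 ∈ I js := (Finset.mem_filter.mp hjsT).2
    have hi0hat : i0 ∈ Ihat js := by
      rw [hIhat, Finset.mem_sdiff]
      refine ⟨hi0js, fun hcon => ?_⟩
      obtain ⟨k, hk, hik⟩ := Finset.mem_biUnion.mp hcon
      have hkT : k ∈ T := Finset.mem_filter.mpr ⟨Finset.mem_univ _, hik⟩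
      have := hjsmin k hkT
      have hcard := Finset.card_lt_card (Finset.mem_filter.mp hk).2
      omega
    have hjssub : I js ⊆ I j' := by
      rcases eq_or_ne js j' with rfl | hne
      · exact subset_rfl
      rcases h1 js j' hne with h | h | h
      · exact h.subset
      · have := hjsmin j' hj'T
        have hcard := Finset.card_lt_card h
        omega
      · exact absurd hi0j' (Finset.disjoint_left.mp h hi0js)
    -- z vanishes on Ihat js
    have hzIhat : ∀ i ∈ Ihat js, z i = 0 := by
      intro i hi
      have hiIjs : i ∈ I js := (Finset.mem_sdiff.mp (hIhat js ▸ hi)).1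
      exact hzJ' i (Finset.mem_biUnion.mpr ⟨j', hj'J', hjssub hiIjs⟩)
    -- z ∈ SJ: extract the open set
    rw [hSJ] at hzSJ
    obtain ⟨ys, hyint, hyval⟩ := hzSJ
    subst hyval
    set y : Fin n → ℂ := (ys : Fin n → ℂ) with hy
    have hyZ : ∀ i ∈ A, y i = 0 := ys.2
    have hyJ' : ∀ i ∈ J'.biUnion I, y i = 0 := hzJ'
    have hyIhat : ∀ i ∈ Ihat js, y i = 0 := hzIhat
    obtain ⟨tset, htsub, htopen, hyt⟩ := mem_interior.mp hyint
    obtain ⟨O, hOopen, hOeq⟩ := isOpen_induced_iff.mp htopen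
    have hyO : y ∈ O := by
      rw [← hOeq] at hyt
      exact hyt
    obtain ⟨δ, hδpos, hball⟩ := Metric.isOpen_iff.mp hOopen y hyO
    set t : ℝ := δ / 2 with ht
    have htpos : 0 < t := by positivity
    -- the two perturbed points
    set wp : Fin n → ℂ := Function.update y i0 ((t:ℝ):ℂ) with hwp
    set wm : Fin n → ℂ := Function.update y i0 (-((t:ℝ):ℂ)) with hwm
    have hyi0 : y i0 = 0 := hyJ' i0 hi0J'
    have hdist : ∀ c : ℂ, ‖c‖ ≤ t → dist (Function.update y i0 c) y ≤ t := by
      intro c hc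
      rw [dist_pi_le_iff htpos.le]
      intro i
      rcases eq_or_ne i i0 with rfl | hne
      · simp only [Function.update_self]
        rw [hyi0]
        simpa [Complex.dist_eq] using hc
      · rw [Function.update_of_ne hne]
        simpa using htpos.le
    have habs : ‖((t:ℝ):ℂ)‖ ≤ t := by
      rw [Complex.norm_real, Real.norm_of_nonneg htpos.le]
    have habsm : ‖(-((t:ℝ):ℂ))‖ ≤ t := by
      rw [norm_neg, Complex.norm_real, Real.norm_of_nonneg htpos.le]
    have hwpO : wp ∈ O := hball (lt_of_le_of_lt (hdist _ habs) (by rw [ht]; linarith))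
    have hwmO : wm ∈ O := hball (lt_of_le_of_lt (hdist _ habsm) (by rw [ht]; linarith))
    -- the perturbed points are in Z_J
    have hZmem : ∀ c : ℂ, ∀ i ∈ A, Function.update y i0 c i = 0 := by
      intro c i hi
      rcases eq_or_ne i i0 with rfl | hne
      · exact absurd hi hi0A
      · rw [Function.update_of_ne hne]; exact hyZ i hi
    have hwpcl : wp ∈ closure S := by
      have hmem : (⟨wp, hZmem _⟩ : {w : Fin n → ℂ // ∀ i ∈ A, w i = 0}) ∈ tset := by
        rw [← hOeq]; exact hwpO
      exact htsub hmem
    have hwmcl : wm ∈ closure S := by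
      have hmem : (⟨wm, hZmem _⟩ : {w : Fin n → ℂ // ∀ i ∈ A, w i = 0}) ∈ tset := by
        rw [← hOeq]; exact hwmO
      exact htsub hmem
    have hclG : closure S ⊆ closure (G js) := closure_mono (hSG js)
    -- the projection map
    set φ : (Fin n → ℂ) → (Fin n → ℂ) := fun x i => if i ∈ Ihat js then x i else 0 with hφ
    have hφcont : Continuous φ := by
      refine continuous_pi fun i => ?_
      by_cases hi : i ∈ Ihat js
      · simp only [hφ, hi, if_true]; exact continuous_apply i
      · simp only [hφ, hi, if_false]; exact continuous_const
    have hφG : ∀ x ∈ closure (G js), φ x ∈ closure (G js) := by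
      intro x hx
      have himg : φ '' G js ⊆ G js := by
        rintro _ ⟨v, hv, rfl⟩
        exact (hGdep js (φ v) v (fun i hi => by simp [hφ, hi])).mpr hv
      have h1 := image_closure_subset_closure_image (s := G js) hφcont
      exact closure_mono himg (h1 ⟨x, hx, rfl⟩)
    have hv : φ wp ∈ closure (G js) := hφG wp (hclG hwpcl)
    have hvm : φ wm ∈ closure (G js) := hφG wm (hclG hwmcl)
    have hmv : φ wm = -(φ wp) := by
      funext i
      by_cases hi : i ∈ Ihat js
      · simp only [hφ, hi, if_true, Pi.neg_apply]
        rcases eq_or_ne i i0 with rfl | hne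
        · simp [hwm, hwp]
        · rw [hwm, hwp, Function.update_of_ne hne, Function.update_of_ne hne]
          rw [hyIhat i hi]; ring
      · simp [hφ, hi]
    rw [hmv] at hvm
    have hzero := hGproper js (φ wp) hv hvm i0 hi0hat
    have hval : φ wp i0 = ((t:ℝ):ℂ) := by
      simp [hφ, hi0hat, hwp]
    rw [hval] at hzero
    have htz : (t:ℝ) = 0 := by exact_mod_cast hzero
    linarith
end

section
/- Let $S=S(U,\{G_j\},\epsilon)$ be a proper multi-cone and $J$ a nonempty subset of $\{1,\dots,\ell\}$. Let $\pi_J:X\to Z_J$ be the coordinate projection setting $z_i=0$ for $i\in I_J$. Then $\pi_J(S)=S_J$. -/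
open Finset

noncomputable def nn12 {n : ℕ} (A : Finset (Fin n)) (z : Fin n → ℂ) : ℝ :=
  Real.sqrt (∑ i ∈ A, ‖z i‖ ^ 2)

lemma nn12_nonneg {n : ℕ} {A : Finset (Fin n)} {z : Fin n → ℂ} : 0 ≤ nn12 A z :=
  Real.sqrt_nonneg _

lemma nn12_congr {n : ℕ} {A : Finset (Fin n)} {z w : Fin n → ℂ}
    (h : ∀ i ∈ A, z i = w i) : nn12 A z = nn12 A w := by
  unfold nn12; congr 1; exact Finset.sum_congr rfl fun i hi => by rw [h i hi]

lemma nn12_scale {n : ℕ} {A : Finset (Fin n)} {z w : Fin n → ℂ} {t : ℝ} (ht : 0 ≤ t)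
    (h : ∀ i ∈ A, z i = (t : ℂ) * w i) : nn12 A z = t * nn12 A w := by
  unfold nn12
  rw [← Real.sqrt_sq ht, ← Real.sqrt_mul (sq_nonneg t), Finset.mul_sum]
  congr 1
  refine Finset.sum_congr rfl fun i hi => ?_
  rw [h i hi, norm_mul, mul_pow, Complex.norm_real, Real.norm_eq_abs, abs_of_nonneg ht]

lemma nn12_pos {n : ℕ} {A : Finset (Fin n)} {z : Fin n → ℂ}
    (h : ∃ i ∈ A, z i ≠ 0) : 0 < nn12 A z := by
  obtain ⟨i, hiA, hiz⟩ := h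
  refine Real.sqrt_pos.2 (Finset.sum_pos' (fun j _ => by positivity) ⟨i, hiA, ?_⟩)
  exact pow_pos (norm_pos_iff.mpr hiz) 2

lemma nn12_continuous {n : ℕ} (A : Finset (Fin n)) : Continuous (nn12 A) :=
  Real.continuous_sqrt.comp <| continuous_finset_sum _ fun i _ =>
    ((continuous_norm.comp (continuous_apply i)).pow 2)

lemma mem_of_ball_subset_closure {E : Type*} [NormedAddCommGroup E] [NormedSpace ℝ E]
    {s : Set E} (hconv : Convex ℝ s) (hopen : IsOpen s) {x0 : E} (hx0 : x0 ∈ s)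
    {w : E} {δ : ℝ} (hδ : 0 < δ) (hball : ∀ y, dist y w < δ → y ∈ closure s) : w ∈ s := by
  set d : ℝ := ‖w - x0‖ with hd
  have hd0 : 0 ≤ d := norm_nonneg _
  set r : ℝ := δ / (d + 1) with hr
  have hrpos : 0 < r := div_pos hδ (by linarith)
  have hz' : w + r • (w - x0) ∈ closure s := by
    apply hball
    have : dist (w + r • (w - x0)) w = r * d := by
      rw [dist_eq_norm]
      simp [norm_smul, abs_of_pos hrpos, hd]
    rw [this, hr]
    calc δ / (d + 1) * d < δ / (d + 1) * (d + 1) := by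
          apply mul_lt_mul_of_pos_left (by linarith) (div_pos hδ (by linarith))
      _ = δ := by field_simp
  have h1r : (1 : ℝ) + r ≠ 0 := by positivity
  have key := hconv.combo_interior_closure_mem_interior
    (x := x0) (y := w + r • (w - x0)) (a := r / (1 + r)) (b := 1 / (1 + r))
    (by rw [hopen.interior_eq]; exact hx0) hz'
    (div_pos hrpos (by linarith)) (by positivity) (by field_simp; ring)
  have heq : (r / (1 + r)) • x0 + (1 / (1 + r)) • (w + r • (w - x0)) = w := by
    match_scalars <;> field_simp <;> ring
  rw [heq, hopen.interior_eq] at key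
  exact key

/-- Corollary 7.4: for nonempty `J`, the coordinate projection `π_J`
(setting `z i = 0` for `i ∈ I_J`) maps `S` onto `S_J`. -/
theorem stmt_12
    (n ℓ : ℕ) (I : Fin ℓ → Finset (Fin n))
    (h1 : ∀ j k, j ≠ k → I j ⊂ I k ∨ I k ⊂ I j ∨ Disjoint (I j) (I k))
    (h2 : ∀ j, (Finset.univ.filter (fun k => I k ⊂ I j)).biUnion I ⊂ I j)
    (Ihat : Fin ℓ → Finset (Fin n))
    (hIhat : ∀ j, Ihat j = I j \ (Finset.univ.filter (fun k => I k ⊂ I j)).biUnion I)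
    (nrm : Finset (Fin n) → (Fin n → ℂ) → ℝ)
    (hnrm : ∀ A z, nrm A z = Real.sqrt (∑ i ∈ A, ‖z i‖ ^ 2))
    (G : Fin ℓ → Set (Fin n → ℂ))
    (hGopen : ∀ j, IsOpen (G j))
    (hGconv : ∀ j, Convex ℝ (G j))
    (hGcone : ∀ j, ∀ z ∈ G j, ∀ c : ℝ, 0 < c → c • z ∈ G j)
    (hGne : ∀ j, (G j).Nonempty)
    (hG0 : ∀ j, (0 : Fin n → ℂ) ∉ G j)
    (hGdep : ∀ j, ∀ z w : Fin n → ℂ, (∀ i ∈ Ihat j, z i = w i) → (z ∈ G j ↔ w ∈ G j))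
    (hGproper : ∀ j, ∀ z, z ∈ closure (G j) → -z ∈ closure (G j) → ∀ i ∈ Ihat j, z i = 0)
    (R : Fin ℓ → ℝ) (hR : ∀ j, 0 < R j)
    (W : Set (Fin n → ℂ)) (hWconv : Convex ℝ W) (hWopen : IsOpen W) (hWne : W.Nonempty)
    (hWdep : ∀ z w : Fin n → ℂ, (∀ i, (∀ j, i ∉ I j) → z i = w i) → (z ∈ W ↔ w ∈ W))
    (U : Set (Fin n → ℂ))
    (hU : U = {z | (∀ j, nrm (Ihat j) z < R j) ∧ z ∈ W})
    (ε : ℝ) (hε : 0 < ε)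
    (V : Fin ℓ → Set (Fin n → ℂ))
    (hV : ∀ j, V j = {z ∈ U | z ∈ G j ∧ ∀ β, I β ⊂ I j → nrm (Ihat β) z < ε * nrm (Ihat j) z})
    (S : Set (Fin n → ℂ)) (hS : S = ⋂ j, V j)
    (J : Finset (Fin ℓ)) (hJne : J.Nonempty)
    (SJ : Set (Fin n → ℂ))
    (hSJ : SJ = Subtype.val ''
      interior {z : {w : Fin n → ℂ // ∀ i ∈ J.biUnion I, w i = 0} | (z : Fin n → ℂ) ∈ closure S})
    : (fun z : Fin n → ℂ => fun i => if i ∈ J.biUnion I then 0 else z i) '' S = SJ := by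
  classical
  have hnn : ∀ A z, nrm A z = nn12 A z := fun A z => (hnrm A z)
  simp only [hnn] at hU hV
  set JI : Finset (Fin n) := J.biUnion I with hJIdef
  set P : (Fin n → ℂ) → (Fin n → ℂ) := fun z i => if i ∈ JI then 0 else z i with hPdef
  set ZS : Set (Fin n → ℂ) := {w | ∀ i ∈ JI, w i = 0} with hZSdef
  -- basic combinatorial facts
  have hIhatsub : ∀ j, Ihat j ⊆ I j := fun j => by rw [hIhat]; exact Finset.sdiff_subset
  have hdisj : ∀ j β, I β ⊂ I j → ∀ i ∈ Ihat j, i ∉ I β := by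
    intro j β hss i hi hib
    rw [hIhat] at hi
    exact (Finset.mem_sdiff.1 hi).2
      (Finset.mem_biUnion.2 ⟨β, Finset.mem_filter.2 ⟨Finset.mem_univ β, hss⟩, hib⟩)
  have hB : ∀ k, ¬ I k ⊆ JI → ∀ i ∈ Ihat k, i ∉ JI := by
    intro k hk i hik hiJI
    obtain ⟨j, hjJ, hij⟩ := Finset.mem_biUnion.1 hiJI
    by_cases hjk : j = k
    · exact hk (hjk ▸ Finset.subset_biUnion_of_mem I hjJ)
    · rcases h1 j k hjk with hlt | hgt | hd
      · exact hdisj k j hlt i hik hij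
      · exact hk ((subset_of_ssubset hgt).trans (Finset.subset_biUnion_of_mem I hjJ))
      · exact (Finset.disjoint_left.1 hd hij) (hIhatsub k hik)
  have hGpos : ∀ j z, z ∈ G j → ∃ i ∈ Ihat j, z i ≠ 0 := by
    intro j z hz
    by_contra hcon
    push_neg at hcon
    exact hG0 j ((hGdep j z 0 (fun i hi => by simpa using hcon i hi)).1 hz)
  -- membership characterization of S
  have hSmem : ∀ z, z ∈ S ↔ (z ∈ W ∧ (∀ k, nn12 (Ihat k) z < R k) ∧
      ∀ j, z ∈ G j ∧ ∀ β, I β ⊂ I j → nn12 (Ihat β) z < ε * nn12 (Ihat j) z) := by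
    intro z
    rw [hS, Set.mem_iInter]
    constructor
    · intro h
      obtain ⟨j0, _⟩ := hJne
      have h0 := h j0
      rw [hV j0] at h0
      have hzU : z ∈ U := h0.1
      rw [hU] at hzU
      refine ⟨hzU.2, hzU.1, fun j => ?_⟩
      have hj := h j
      rw [hV j] at hj
      exact hj.2
    · intro ⟨hzW, hzR, hzj⟩ j
      rw [hV j]
      exact ⟨by rw [hU]; exact ⟨hzR, hzW⟩, hzj j⟩
  -- the open set O
  set O : Set (Fin n → ℂ) := W ∩ ⋂ j, {w | ¬ I j ⊆ JI →
      w ∈ G j ∩ {w | nn12 (Ihat j) w < R j} ∩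
        ⋂ β, {w | (I β ⊂ I j ∧ ¬ I β ⊆ JI) → nn12 (Ihat β) w < ε * nn12 (Ihat j) w}} with hOdef
  have hOmem : ∀ w, w ∈ O ↔ (w ∈ W ∧ ∀ j, ¬ I j ⊆ JI →
      (w ∈ G j ∧ nn12 (Ihat j) w < R j ∧
        ∀ β, I β ⊂ I j → ¬ I β ⊆ JI → nn12 (Ihat β) w < ε * nn12 (Ihat j) w)) := by
    intro w
    rw [hOdef]
    simp only [Set.mem_inter_iff, Set.mem_iInter, Set.mem_setOf_eq]
    constructor
    · rintro ⟨hW, h⟩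
      exact ⟨hW, fun j hj => ⟨(h j hj).1.1, (h j hj).1.2,
        fun β h1 h2 => (h j hj).2 β ⟨h1, h2⟩⟩⟩
    · rintro ⟨hW, h⟩
      exact ⟨hW, fun j hj => ⟨⟨(h j hj).1, (h j hj).2.1⟩,
        fun β hb => (h j hj).2.2 β hb.1 hb.2⟩⟩
  have hOpenImp : ∀ (p : Prop) (s : Set (Fin n → ℂ)), IsOpen s → IsOpen {w | p → w ∈ s} := by
    intro p s hs
    by_cases hp : p
    · have : {w : Fin n → ℂ | p → w ∈ s} = s := by ext x; simp [hp]
      rw [this]; exact hs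
    · have : {w : Fin n → ℂ | p → w ∈ s} = Set.univ := by ext x; simp [hp]
      rw [this]; exact isOpen_univ
  have hOopen : IsOpen O := by
    rw [hOdef]
    refine hWopen.inter (isOpen_iInter_of_finite fun j => hOpenImp _ _ ?_)
    refine (((hGopen j).inter (isOpen_lt (nn12_continuous _) continuous_const)).inter
      (isOpen_iInter_of_finite fun β => ?_))
    have : {w : Fin n → ℂ | (I β ⊂ I j ∧ ¬ I β ⊆ JI) →
        nn12 (Ihat β) w < ε * nn12 (Ihat j) w} =
        {w | (I β ⊂ I j ∧ ¬ I β ⊆ JI) →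
          w ∈ {w : Fin n → ℂ | nn12 (Ihat β) w < ε * nn12 (Ihat j) w}} := rfl
    rw [this]
    exact hOpenImp _ _ (isOpen_lt (nn12_continuous _) (continuous_const.mul (nn12_continuous _)))
  have hPZS : ∀ z, ∀ i ∈ JI, P z i = 0 := by
    intro z i hi
    simp only [hPdef]
    rw [if_pos hi]
  have hnotJI : ∀ i : Fin n, (∀ j, i ∉ I j) → i ∉ JI := by
    intro i h hi
    obtain ⟨j, hjJ, hij⟩ := Finset.mem_biUnion.1 hi
    exact h j hij
  have hPout : ∀ (z : Fin n → ℂ) (i : Fin n), i ∉ JI → P z i = z i := fun z i hi => by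
    simp only [hPdef]; rw [if_neg hi]
  have hkey2 : ∀ z ∈ S, P z ∈ O := by
    intro z hz
    obtain ⟨hzW, hzR, hzj⟩ := (hSmem z).1 hz
    rw [hOmem]
    constructor
    · exact (hWdep (P z) z (fun i h => hPout z i (hnotJI i h))).2 hzW
    · intro j hj
      have hagree : ∀ i ∈ Ihat j, P z i = z i := fun i hi => hPout z i (hB j hj i hi)
      refine ⟨(hGdep j (P z) z hagree).2 (hzj j).1, ?_, ?_⟩
      · rw [nn12_congr hagree]; exact hzR j
      · intro β hss hβ
        have hagreeβ : ∀ i ∈ Ihat β, P z i = z i := fun i hi => hPout z i (hB β hβ i hi)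
        rw [nn12_congr hagreeβ, nn12_congr hagree]
        exact (hzj j).2 β hss
  have hkey1 : ∀ z0 ∈ S, ∀ w, w ∈ O → (∀ i ∈ JI, w i = 0) → w ∈ P '' S ∧ w ∈ closure S := by
    intro z0 hz0 w hwO hwZ
    obtain ⟨hz0W, hz0R, hz0j⟩ := (hSmem z0).1 hz0
    rw [hOmem] at hwO
    obtain ⟨hwW, hwB⟩ := hwO
    set zf : ℝ → (Fin n → ℂ) := fun t i => if i ∈ JI then (t : ℂ) * z0 i else w i with hzf
    have hzfin : ∀ t (i : Fin n), i ∈ JI → zf t i = (t:ℂ) * z0 i := fun t i hi => by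
      simp only [hzf]; rw [if_pos hi]
    have hzfout : ∀ t (i : Fin n), i ∉ JI → zf t i = w i := fun t i hi => by
      simp only [hzf]; rw [if_neg hi]
    have hPzf : ∀ t, P (zf t) = w := by
      intro t; funext i
      by_cases hi : i ∈ JI
      · simp only [hPdef]; rw [if_pos hi]; exact (hwZ i hi).symm
      · simp only [hPdef]; rw [if_neg hi]; exact hzfout t i hi
    have hmain : ∀ t : ℝ, 0 < t → t ≤ 1 →
        (∀ j β, ¬ I j ⊆ JI → I β ⊂ I j → I β ⊆ JI →
          t * nn12 (Ihat β) z0 < ε * nn12 (Ihat j) w) →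
        zf t ∈ S := by
      intro t ht0 ht1 htc
      rw [hSmem]
      have hsA : ∀ k, I k ⊆ JI → ∀ i ∈ Ihat k, zf t i = (t:ℂ) * z0 i :=
        fun k hk i hi => hzfin t i (hk (hIhatsub k hi))
      have hsB : ∀ k, ¬ I k ⊆ JI → ∀ i ∈ Ihat k, zf t i = w i :=
        fun k hk i hi => hzfout t i (hB k hk i hi)
      refine ⟨?_, ?_, ?_⟩
      · exact (hWdep (zf t) w (fun i h => hzfout t i (hnotJI i h))).2 hwW
      · intro k
        by_cases hk : I k ⊆ JI
        · rw [nn12_scale ht0.le (hsA k hk)]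
          calc t * nn12 (Ihat k) z0 ≤ 1 * nn12 (Ihat k) z0 :=
                mul_le_mul_of_nonneg_right ht1 nn12_nonneg
            _ = nn12 (Ihat k) z0 := one_mul _
            _ < R k := hz0R k
        · rw [nn12_congr (hsB k hk)]
          exact (hwB k hk).2.1
      · intro j
        constructor
        · by_cases hj : I j ⊆ JI
          · have hsm : ∀ i ∈ Ihat j, zf t i = (t • z0) i := by
              intro i hi
              rw [hsA j hj i hi, Pi.smul_apply, Complex.real_smul]
            exact (hGdep j (zf t) (t • z0) hsm).2 (hGcone j z0 (hz0j j).1 t ht0)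
          · exact (hGdep j (zf t) w (hsB j hj)).2 (hwB j hj).1
        · intro β hss
          by_cases hj : I j ⊆ JI
          · have hβ : I β ⊆ JI := (subset_of_ssubset hss).trans hj
            rw [nn12_scale ht0.le (hsA β hβ), nn12_scale ht0.le (hsA j hj)]
            nlinarith [(hz0j j).2 β hss, ht0]
          · by_cases hβ : I β ⊆ JI
            · rw [nn12_scale ht0.le (hsA β hβ), nn12_congr (hsB j hj)]
              exact htc j β hj hss hβ
            · rw [nn12_congr (hsB β hβ), nn12_congr (hsB j hj)]
              exact (hwB j hj).2.2 β hss hβ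
    have hev : ∀ᶠ t in nhdsWithin (0:ℝ) (Set.Ioi 0), (0 < t ∧ t ≤ 1) ∧
        ∀ j, ∀ β, ¬ I j ⊆ JI → I β ⊂ I j → I β ⊆ JI →
          t * nn12 (Ihat β) z0 < ε * nn12 (Ihat j) w := by
      refine Filter.Eventually.and ?_ ?_
      · filter_upwards [Ioo_mem_nhdsGT_of_mem (Set.left_mem_Ico.mpr zero_lt_one)] with t ht
        exact ⟨ht.1, le_of_lt ht.2⟩
      · rw [Filter.eventually_all]
        intro j
        rw [Filter.eventually_all]
        intro β
        by_cases hcond : ¬ I j ⊆ JI ∧ I β ⊂ I j ∧ I β ⊆ JI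
        · obtain ⟨hj, hss, hβ⟩ := hcond
          have hjw : 0 < nn12 (Ihat j) w := nn12_pos (hGpos j w (hwB j hj).1)
          have hrhs : (0:ℝ) < ε * nn12 (Ihat j) w := mul_pos hε hjw
          have htend : Filter.Tendsto (fun t : ℝ => t * nn12 (Ihat β) z0)
              (nhdsWithin (0:ℝ) (Set.Ioi 0)) (nhds 0) := by
            have h := (continuous_mul_right (nn12 (Ihat β) z0)).tendsto 0
            rw [zero_mul] at h
            exact h.mono_left nhdsWithin_le_nhds
          filter_upwards [htend.eventually_lt_const hrhs] with t ht _ _ _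
          exact ht
        · filter_upwards with t h1 h2 h3
          exact absurd ⟨h1, h2, h3⟩ hcond
    have hevS : ∀ᶠ t in nhdsWithin (0:ℝ) (Set.Ioi 0), zf t ∈ S := by
      filter_upwards [hev] with t ht
      exact hmain t ht.1.1 ht.1.2 ht.2
    constructor
    · obtain ⟨t, ht⟩ := hevS.exists
      exact ⟨zf t, ht, hPzf t⟩
    · have hzf0 : zf 0 = w := by
        funext i
        by_cases hi : i ∈ JI
        · rw [hzfin 0 i hi, (hwZ i hi)]
          simp
        · exact hzfout 0 i hi
      have hcont : Continuous zf := by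
        apply continuous_pi
        intro i
        by_cases hi : i ∈ JI
        · have h : (fun t : ℝ => zf t i) = fun t : ℝ => (t:ℂ) * z0 i :=
            funext fun t => hzfin t i hi
          rw [h]; exact Complex.continuous_ofReal.mul continuous_const
        · have h : (fun t : ℝ => zf t i) = fun _ => w i := funext fun t => hzfout t i hi
          rw [h]; exact continuous_const
      have htend : Filter.Tendsto zf (nhdsWithin (0:ℝ) (Set.Ioi 0)) (nhds w) := by
        have h := hcont.tendsto 0
        rw [hzf0] at h
        exact h.mono_left nhdsWithin_le_nhds
      exact mem_closure_of_tendsto htend hevS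
  have hkey3 : ∀ w : Fin n → ℂ, (∀ i ∈ JI, w i = 0) → ∀ δ : ℝ, 0 < δ →
      (∀ y : Fin n → ℂ, (∀ i ∈ JI, y i = 0) → dist y w < δ → y ∈ closure S) → w ∈ O := by
    intro w hwZ δ hδ hball
    have hwS : w ∈ closure S := hball w hwZ (by simpa using hδ)
    have hclW : closure S ⊆ closure W := closure_mono fun z hz => ((hSmem z).1 hz).1
    have hclG : ∀ j, closure S ⊆ closure (G j) :=
      fun j => closure_mono fun z hz => (((hSmem z).1 hz).2.2 j).1
    have hclR : ∀ k, ∀ z ∈ closure S, nn12 (Ihat k) z ≤ R k := by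
      intro k
      have h : closure S ⊆ {z | nn12 (Ihat k) z ≤ R k} :=
        closure_minimal (fun z hz => le_of_lt (((hSmem z).1 hz).2.1 k))
          (isClosed_le (nn12_continuous _) continuous_const)
      exact fun z hz => h hz
    have hclE : ∀ j β, I β ⊂ I j → ∀ z ∈ closure S,
        nn12 (Ihat β) z ≤ ε * nn12 (Ihat j) z := by
      intro j β hss
      have h : closure S ⊆ {z | nn12 (Ihat β) z ≤ ε * nn12 (Ihat j) z} :=
        closure_minimal (fun z hz => le_of_lt ((((hSmem z).1 hz).2.2 j).2 β hss))
          (isClosed_le (nn12_continuous _) (continuous_const.mul (nn12_continuous _)))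
      exact fun z hz => h hz
    have hPw : P w = w := by
      funext i
      by_cases hi : i ∈ JI
      · simp only [hPdef]; rw [if_pos hi]; exact (hwZ i hi).symm
      · exact hPout w i hi
    have hPdist : ∀ y : Fin n → ℂ, dist (P y) w ≤ dist y w := by
      intro y
      have h1 : dist (P y) (P w) ≤ dist y w := by
        rw [dist_pi_le_iff dist_nonneg]
        intro i
        by_cases hi : i ∈ JI
        · have e1 : P y i = 0 := by simp only [hPdef]; rw [if_pos hi]
          have e2 : P w i = 0 := by simp only [hPdef]; rw [if_pos hi]
          rw [e1, e2, dist_self]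
          exact dist_nonneg
        · rw [hPout y i hi, hPout w i hi]
          exact dist_le_pi_dist y w i
      rwa [hPw] at h1
    have hfac : ∀ (s : Set (Fin n → ℂ)), Convex ℝ s → IsOpen s → s.Nonempty →
        closure S ⊆ closure s →
        (∀ (g u : Fin n → ℂ), (∀ i : Fin n, i ∉ JI → u i = 0) → g ∈ s → g + u ∈ s) →
        w ∈ s := by
      intro s hconv hopen hne hcl hstab
      refine mem_of_ball_subset_closure hconv hopen hne.choose_spec hδ ?_
      intro y hy
      have hyP : P y ∈ closure s := hcl (hball (P y) (hPZS y) (lt_of_le_of_lt (hPdist y) hy))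
      have hu : ∀ i : Fin n, i ∉ JI → (y - P y) i = 0 := by
        intro i hi
        simp only [Pi.sub_apply]
        rw [hPout y i hi, sub_self]
      have hmap : Set.MapsTo (fun x => x + (y - P y)) s s := fun g hg => hstab g _ hu hg
      have h2 := map_mem_closure (continuous_id.add continuous_const) hyP hmap
      simpa using h2
    have hpert : ∀ (v : Fin n → ℂ), (∀ i ∈ JI, v i = 0) →
        ∃ s : ℝ, 0 < s ∧ w + s • v ∈ closure S := by
      intro v hv
      refine ⟨δ / (2 * (‖v‖ + 1)), by positivity, ?_⟩
      apply hball
      · intro i hi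
        simp only [Pi.add_apply, Pi.smul_apply]
        rw [hwZ i hi, hv i hi, smul_zero, add_zero]
      · have hd : dist (w + (δ / (2 * (‖v‖ + 1))) • v) w = (δ / (2 * (‖v‖ + 1))) * ‖v‖ := by
          rw [dist_eq_norm, add_sub_cancel_left, norm_smul, Real.norm_eq_abs,
            abs_of_pos (by positivity)]
        rw [hd, div_mul_eq_mul_div, div_lt_iff₀ (by positivity)]
        nlinarith [norm_nonneg v, hδ]
    rw [hOmem]
    constructor
    · refine hfac W hWconv hWopen hWne hclW ?_
      intro g u hu hg
      refine (hWdep (g + u) g ?_).2 hg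
      intro i hi
      simp only [Pi.add_apply]
      rw [hu i (hnotJI i hi), add_zero]
    · intro j hj
      have hwG : w ∈ G j := by
        refine hfac (G j) (hGconv j) (hGopen j) (hGne j) (hclG j) ?_
        intro g u hu hg
        refine (hGdep j (g + u) g ?_).2 hg
        intro i hi
        simp only [Pi.add_apply]
        rw [hu i (hB j hj i hi), add_zero]
      refine ⟨hwG, ?_, ?_⟩
      · rcases lt_or_eq_of_le (hclR j w hwS) with h | h
        · exact h
        · exfalso
          set v : Fin n → ℂ := fun i => if i ∈ Ihat j then w i else 0 with hvdef
          have hvz : ∀ i ∈ JI, v i = 0 := by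
            intro i hi
            simp only [hvdef]
            rw [if_neg (fun hmem => hB j hj i hmem hi)]
          obtain ⟨s, hs, hws⟩ := hpert v hvz
          have hscale : ∀ i ∈ Ihat j, (w + s • v) i = (((1+s : ℝ)) : ℂ) * w i := by
            intro i hi
            simp only [Pi.add_apply, Pi.smul_apply, hvdef]
            rw [if_pos hi, Complex.real_smul]
            push_cast
            ring
          have h1 := hclR j _ hws
          rw [nn12_scale (by positivity : (0:ℝ) ≤ 1 + s) hscale, h] at h1
          nlinarith [hR j, hs]
      · intro β hss hβ
        rcases lt_or_eq_of_le (hclE j β hss w hwS) with h | h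
        · exact h
        · exfalso
          have hjpos : 0 < nn12 (Ihat j) w := nn12_pos (hGpos j w hwG)
          have hβpos : 0 < nn12 (Ihat β) w := by
            rw [h]; exact mul_pos hε hjpos
          set v : Fin n → ℂ := fun i => if i ∈ Ihat β then w i else 0 with hvdef
          have hvz : ∀ i ∈ JI, v i = 0 := by
            intro i hi
            simp only [hvdef]
            rw [if_neg (fun hmem => hB β hβ i hmem hi)]
          obtain ⟨s, hs, hws⟩ := hpert v hvz
          have hscaleβ : ∀ i ∈ Ihat β, (w + s • v) i = (((1+s : ℝ)) : ℂ) * w i := by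
            intro i hi
            simp only [Pi.add_apply, Pi.smul_apply, hvdef]
            rw [if_pos hi, Complex.real_smul]
            push_cast
            ring
          have hcongrj : ∀ i ∈ Ihat j, (w + s • v) i = w i := by
            intro i hi
            have hnot : i ∉ Ihat β := fun hmem => hdisj j β hss i hi (hIhatsub β hmem)
            simp only [Pi.add_apply, Pi.smul_apply, hvdef]
            rw [if_neg hnot, smul_zero, add_zero]
          have h1 := hclE j β hss _ hws
          rw [nn12_scale (by positivity : (0:ℝ) ≤ 1 + s) hscaleβ, nn12_congr hcongrj,
            ← h] at h1
          nlinarith [hβpos, hs]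
  -- final assembly
  rcases Set.eq_empty_or_nonempty S with hSe | hSne
  · rw [hSJ, hSe]
    simp [closure_empty]
  · obtain ⟨z0, hz0⟩ := hSne
    apply Set.eq_of_subset_of_subset
    · rintro w ⟨z, hzS, rfl⟩
      rw [hSJ]
      have hO := hkey2 z hzS
      refine ⟨⟨P z, hPZS z⟩, ?_, rfl⟩
      have hopen : IsOpen (Subtype.val ⁻¹' O :
          Set {w : Fin n → ℂ // ∀ i ∈ JI, w i = 0}) :=
        hOopen.preimage continuous_subtype_val
      have hsub : (Subtype.val ⁻¹' O : Set {w : Fin n → ℂ // ∀ i ∈ JI, w i = 0}) ⊆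
          {z : {w : Fin n → ℂ // ∀ i ∈ JI, w i = 0} | (z : Fin n → ℂ) ∈ closure S} := by
        intro u hu
        exact (hkey1 z0 hz0 u.1 hu u.2).2
      exact interior_maximal hsub hopen hO
    · intro w hw
      rw [hSJ] at hw
      obtain ⟨wt, hwint, rfl⟩ := hw
      have hC : {z : {w : Fin n → ℂ // ∀ i ∈ JI, w i = 0} | (z : Fin n → ℂ) ∈ closure S} ∈
          nhds wt := mem_interior_iff_mem_nhds.1 hwint
      obtain ⟨δ, hδ, hballs⟩ := Metric.mem_nhds_iff.1 hC
      have hb' : ∀ y : Fin n → ℂ, (∀ i ∈ JI, y i = 0) →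
          dist y (wt : Fin n → ℂ) < δ → y ∈ closure S := by
        intro y hy hd
        have hmem : (⟨y, hy⟩ : {w : Fin n → ℂ // ∀ i ∈ JI, w i = 0}) ∈ Metric.ball wt δ := by
          rw [Metric.mem_ball, Subtype.dist_eq]
          exact hd
        exact hballs hmem
      have hO := hkey3 (wt : Fin n → ℂ) wt.2 δ hδ hb'
      exact (hkey1 z0 hz0 _ hO wt.2).1
end
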